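/- arXiv:0706.2642 — 9 statements merged into one kernel-verified Lean document; each statement's English description precedes it below -/
import Mathlib

section
/- For f n-times continuously differentiable on [0,∞) with f and all derivatives up to order n of polynomial growth, and s ≥ n, we have M(f^{(n)})(s) = Σ_{i=0}^n (−1)^i C(n,i) Mf(s−i). -/
open MeasureTheory Set Real Filter Topology

lemma integrable_aux (g : ℝ → ℝ) (hg : ContinuousOn g (Set.Ici 0)) (C : ℝ) (N : ℕ)
    (hb : ∀ x ≥ (0:ℝ), |g x| ≤ C * x ^ N) (s : ℝ) (hs : 0 ≤ s) :
    IntegrableOn (fun x => g x * x ^ s * Real.exp (-x)) (Set.Ioi 0) := by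
  have hpos : (0:ℝ) < (N:ℝ) + s + 1 := by positivity
  have hmaj : IntegrableOn (fun x : ℝ => C * (Real.exp (-x) * x ^ ((N:ℝ) + s + 1 - 1))) (Set.Ioi 0) :=
    (Real.GammaIntegral_convergent hpos).const_mul C
  refine hmaj.integrable.mono' ?_ ?_
  · refine (ContinuousOn.mul (ContinuousOn.mul (hg.mono Set.Ioi_subset_Ici_self) ?_)
      (Real.continuous_exp.comp continuous_neg).continuousOn).aestronglyMeasurable measurableSet_Ioi
    intro x hx
    exact (Real.continuousAt_rpow_const x s (Or.inl (ne_of_gt hx))).continuousWithinAt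
  · filter_upwards [ae_restrict_mem measurableSet_Ioi] with x hx
    have hx0 : (0:ℝ) < x := hx
    have h1 : |g x * x ^ s * Real.exp (-x)| = |g x| * x ^ s * Real.exp (-x) := by
      rw [abs_mul, abs_mul, abs_of_nonneg (Real.rpow_nonneg hx0.le s),
        abs_of_nonneg (Real.exp_nonneg _)]
    rw [Real.norm_eq_abs, h1]
    have h2 : x ^ ((N:ℝ) + s + 1 - 1) = x ^ (N:ℕ) * x ^ s := by
      rw [show (N:ℝ) + s + 1 - 1 = (N:ℝ) + s by ring, Real.rpow_add hx0, Real.rpow_natCast]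
    rw [h2]
    have h3 := hb x hx0.le
    have h4 : (0:ℝ) < x ^ s * Real.exp (-x) := by positivity
    calc |g x| * x ^ s * Real.exp (-x) ≤ (C * x ^ (N:ℕ)) * (x ^ s * Real.exp (-x)) := by
          rw [mul_assoc]; exact mul_le_mul_of_nonneg_right h3 h4.le
      _ = C * (Real.exp (-x) * (x ^ (N:ℕ) * x ^ s)) := by ring

noncomputable def twistedMellin (f : ℝ → ℝ) (s : ℝ) : ℝ :=
  (∫ x in Set.Ioi (0:ℝ), f x * x ^ s * Real.exp (-x)) / Real.Gamma (s + 1)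

lemma step_lemma (g g' : ℝ → ℝ) (hgc : ContinuousOn g (Set.Ici 0))
    (hderiv : ∀ x ∈ Set.Ici (0:ℝ), HasDerivWithinAt g (g' x) (Set.Ici 0) x)
    (hg'c : ContinuousOn g' (Set.Ici 0)) (C : ℝ) (N : ℕ)
    (hb0 : ∀ x ≥ (0:ℝ), |g x| ≤ C * x ^ N)
    (hb1 : ∀ x ≥ (0:ℝ), |g' x| ≤ C * x ^ N)
    (s : ℝ) (hs : 1 ≤ s) :
    twistedMellin g' s = twistedMellin g s - twistedMellin g (s-1) := by
  have hs0 : (0:ℝ) < s := lt_of_lt_of_le one_pos hs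
  have hC : 0 ≤ C := by
    have := hb0 1 zero_le_one
    simpa using (abs_nonneg (g 1)).trans this
  set F : ℝ → ℝ := fun x => g x * (x ^ s * Real.exp (-x)) with hF_def
  set F' : ℝ → ℝ := fun x => g' x * (x ^ s * Real.exp (-x)) +
      g x * (s * x ^ (s-1) * Real.exp (-x) + x ^ s * (Real.exp (-x) * (-1))) with hF'_def
  -- derivative
  have hF : ∀ x ∈ Set.Ioi (0:ℝ), HasDerivAt F (F' x) x := by
    intro x hx
    have hx0 : (0:ℝ) < x := hx
    have h1 : HasDerivAt g (g' x) x := (hderiv x hx0.le).hasDerivAt (Ici_mem_nhds hx0)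
    have h2 : HasDerivAt (fun y : ℝ => y ^ s) (s * x ^ (s-1)) x :=
      Real.hasDerivAt_rpow_const (Or.inl hx0.ne')
    have h3 : HasDerivAt (fun y : ℝ => Real.exp (-y)) (Real.exp (-x) * (-1)) x :=
      (hasDerivAt_neg x).exp
    exact h1.mul (h2.mul h3)
  -- integrability pieces
  have hA : IntegrableOn (fun x => g' x * x ^ s * Real.exp (-x)) (Set.Ioi 0) :=
    integrable_aux g' hg'c C N hb1 s hs0.le
  have hGs : IntegrableOn (fun x => g x * x ^ s * Real.exp (-x)) (Set.Ioi 0) :=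
    integrable_aux g hgc C N hb0 s hs0.le
  have hGs1 : IntegrableOn (fun x => g x * x ^ (s-1) * Real.exp (-x)) (Set.Ioi 0) :=
    integrable_aux g hgc C N hb0 (s-1) (by linarith)
  have hA' : IntegrableOn (fun x => g' x * (x ^ s * Real.exp (-x))) (Set.Ioi 0) :=
    hA.congr_fun (fun x _ => by ring) measurableSet_Ioi
  have hB : IntegrableOn (fun x => g x * (s * x ^ (s-1) * Real.exp (-x)
      + x ^ s * (Real.exp (-x) * (-1)))) (Set.Ioi 0) := by
    have h : IntegrableOn (fun x => s * (g x * x ^ (s-1) * Real.exp (-x))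
        - g x * x ^ s * Real.exp (-x)) (Set.Ioi 0) := ((hGs1.const_mul s).sub hGs)
    exact h.congr_fun (fun x _ => by ring) measurableSet_Ioi
  have hF'int : IntegrableOn F' (Set.Ioi 0) := hA'.add hB
  -- continuity at 0
  have hcont : ContinuousWithinAt F (Set.Ici 0) 0 := by
    have hrc : ContinuousOn (fun x : ℝ => x ^ s) (Set.Ici 0) := fun x _ =>
      (Real.continuousAt_rpow_const x s (Or.inr hs0.le)).continuousWithinAt
    exact (hgc.mul (hrc.mul (Real.continuous_exp.comp continuous_neg).continuousOn)) 0
      Set.self_mem_Ici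
  -- tendsto at infinity
  have htend : Tendsto F atTop (𝓝 0) := by
    have hb : Tendsto (fun x : ℝ => C * (x ^ ((N:ℝ)+s) * Real.exp (-1*x))) atTop (𝓝 (C * 0)) :=
      (tendsto_rpow_mul_exp_neg_mul_atTop_nhds_zero ((N:ℝ)+s) 1 one_pos).const_mul C
    rw [mul_zero] at hb
    apply squeeze_zero_norm' _ hb
    filter_upwards [eventually_gt_atTop (0:ℝ)] with x hx
    have hx0 : (0:ℝ) < x := hx
    have h1 : ‖F x‖ = |g x| * (x ^ s * Real.exp (-x)) := by
      rw [Real.norm_eq_abs, hF_def, abs_mul, abs_of_nonneg (by positivity : (0:ℝ) ≤ x ^ s * Real.exp (-x))]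
    rw [h1]
    have h2 : x ^ ((N:ℝ)+s) = x ^ (N:ℕ) * x ^ s := by
      rw [Real.rpow_add hx0, Real.rpow_natCast]
    rw [h2]
    calc |g x| * (x ^ s * Real.exp (-x)) ≤ (C * x ^ (N:ℕ)) * (x ^ s * Real.exp (-x)) :=
          mul_le_mul_of_nonneg_right (hb0 x hx0.le) (by positivity)
      _ = C * (x ^ (N:ℕ) * x ^ s * Real.exp (-1*x)) := by rw [neg_one_mul]; ring
  have hF0 : F 0 = 0 := by
    simp [hF_def, Real.zero_rpow hs0.ne']
  have heq : ∫ x in Set.Ioi (0:ℝ), F' x = 0 - F 0 :=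
    integral_Ioi_of_hasDerivAt_of_tendsto hcont hF hF'int htend
  rw [hF0, sub_zero] at heq
  -- split the integral
  have hsplit : ∫ x in Set.Ioi (0:ℝ), F' x =
      (∫ x in Set.Ioi (0:ℝ), g' x * (x ^ s * Real.exp (-x))) +
      ∫ x in Set.Ioi (0:ℝ), g x * (s * x ^ (s-1) * Real.exp (-x) + x ^ s * (Real.exp (-x) * (-1))) :=
    integral_add hA' hB
  have hBeq : ∫ x in Set.Ioi (0:ℝ), g x * (s * x ^ (s-1) * Real.exp (-x) + x ^ s * (Real.exp (-x) * (-1)))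
      = s * (∫ x in Set.Ioi (0:ℝ), g x * x ^ (s-1) * Real.exp (-x))
        - ∫ x in Set.Ioi (0:ℝ), g x * x ^ s * Real.exp (-x) := by
    rw [← integral_const_mul, ← integral_sub (hGs1.const_mul s) hGs]
    exact setIntegral_congr_fun measurableSet_Ioi (fun x _ => by ring)
  have hAeq : ∫ x in Set.Ioi (0:ℝ), g' x * (x ^ s * Real.exp (-x))
      = ∫ x in Set.Ioi (0:ℝ), g' x * x ^ s * Real.exp (-x) :=
    setIntegral_congr_fun measurableSet_Ioi (fun x _ => by ring)
  have key : (∫ x in Set.Ioi (0:ℝ), g' x * x ^ s * Real.exp (-x))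
      = (∫ x in Set.Ioi (0:ℝ), g x * x ^ s * Real.exp (-x))
        - s * ∫ x in Set.Ioi (0:ℝ), g x * x ^ (s-1) * Real.exp (-x) := by
    rw [hsplit, hAeq, hBeq] at heq
    linarith
  -- final arithmetic
  have hΓ : Real.Gamma (s+1) = s * Real.Gamma s := Real.Gamma_add_one hs0.ne'
  have hΓpos : 0 < Real.Gamma s := Real.Gamma_pos_of_pos hs0
  unfold twistedMellin
  rw [key, hΓ, show s - 1 + 1 = s by ring]
  field_simp

lemma alt_sum (n : ℕ) (F : ℕ → ℝ) :
    ∑ i ∈ Finset.range (n+2), (-1:ℝ)^i * ((n+1).choose i) * F i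
      = ∑ i ∈ Finset.range (n+1), (-1:ℝ)^i * (n.choose i) * (F i - F (i+1)) := by
  have h1 : ∑ i ∈ Finset.range (n+2), (-1:ℝ)^i * ((n+1).choose i) * F i
      = (∑ i ∈ Finset.range (n+1), (-1:ℝ)^(i+1) * ((n+1).choose (i+1)) * F (i+1)) + F 0 := by
    rw [Finset.sum_range_succ']; simp
  have h2 : ∑ i ∈ Finset.range (n+2), (-1:ℝ)^i * (n.choose i) * F i
      = (∑ i ∈ Finset.range (n+1), (-1:ℝ)^(i+1) * (n.choose (i+1)) * F (i+1)) + F 0 := by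
    rw [Finset.sum_range_succ']; simp
  have h3 : ∑ i ∈ Finset.range (n+2), (-1:ℝ)^i * (n.choose i) * F i
      = ∑ i ∈ Finset.range (n+1), (-1:ℝ)^i * (n.choose i) * F i := by
    rw [Finset.sum_range_succ, Nat.choose_eq_zero_of_lt (Nat.lt_succ_self n)]
    simp
  have h4 : ∀ i ∈ Finset.range (n+1), (-1:ℝ)^(i+1) * ((n+1).choose (i+1)) * F (i+1)
      = (-1:ℝ)^(i+1) * (n.choose i) * F (i+1) + (-1:ℝ)^(i+1) * (n.choose (i+1)) * F (i+1) := by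
    intro i _; rw [Nat.choose_succ_succ]; push_cast; ring
  rw [h1, Finset.sum_congr rfl h4, Finset.sum_add_distrib]
  have h5 : (∑ i ∈ Finset.range (n+1), (-1:ℝ)^(i+1) * (n.choose (i+1)) * F (i+1))
      = (∑ i ∈ Finset.range (n+1), (-1:ℝ)^i * (n.choose i) * F i) - F 0 := by
    rw [← h3]; linarith [h2]
  rw [h5]; simp only [mul_sub]; rw [Finset.sum_sub_distrib]
  have h6 : (∑ i ∈ Finset.range (n+1), (-1:ℝ)^(i+1) * (n.choose i) * F (i+1))
      = -∑ i ∈ Finset.range (n+1), (-1:ℝ)^i * (n.choose i) * F (i+1) := by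
    rw [← Finset.sum_neg_distrib]
    exact Finset.sum_congr rfl fun i _ => by rw [pow_succ]; ring
  rw [h6]; ring

lemma aux_main : ∀ (n : ℕ) (f : ℝ → ℝ), ContDiffOn ℝ n f (Set.Ici 0) → ∀ (C : ℝ) (N : ℕ),
    (∀ k ≤ n, ∀ x ≥ (0:ℝ), |iteratedDerivWithin k f (Set.Ici 0) x| ≤ C * x ^ N) →
    ∀ s : ℝ, (n:ℝ) ≤ s →
    twistedMellin (iteratedDerivWithin n f (Set.Ici 0)) s =
      ∑ i ∈ Finset.range (n + 1),
        (-1 : ℝ) ^ i * (n.choose i) * twistedMellin f (s - i) := by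
  intro n
  induction n with
  | zero =>
    intro f hf C N hbd s hs
    simp [iteratedDerivWithin_zero]
  | succ n ih =>
    intro f hf C N hbd s hs
    have hs' : (n:ℝ) + 1 ≤ s := by push_cast at hs; linarith
    have hUD : UniqueDiffOn ℝ (Set.Ici (0:ℝ)) := uniqueDiffOn_Ici 0
    set g : ℝ → ℝ := iteratedDerivWithin n f (Set.Ici 0) with hg_def
    set g' : ℝ → ℝ := iteratedDerivWithin (n+1) f (Set.Ici 0) with hg'_def
    have hder : ∀ x ∈ Set.Ici (0:ℝ), HasDerivWithinAt g (g' x) (Set.Ici 0) x := by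
      intro x hx
      have hd : DifferentiableWithinAt ℝ g (Set.Ici 0) x :=
        hf.differentiableOn_iteratedDerivWithin (by exact_mod_cast Nat.lt_succ_self n) hUD x hx
      have h := hd.hasDerivWithinAt
      rwa [hg'_def, iteratedDerivWithin_succ]
    have hgc : ContinuousOn g (Set.Ici 0) :=
      hf.continuousOn_iteratedDerivWithin (by exact_mod_cast Nat.le_succ n) hUD
    have hg'c : ContinuousOn g' (Set.Ici 0) :=
      hf.continuousOn_iteratedDerivWithin le_rfl hUD
    have h1 : (1:ℝ) ≤ s := le_trans (by linarith [Nat.cast_nonneg (α := ℝ) n]) hs'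
    have hstep := step_lemma g g' hgc hder hg'c C N (hbd n (Nat.le_succ n)) (hbd (n+1) le_rfl) s h1
    have hfn : ContDiffOn ℝ n f (Set.Ici 0) := hf.of_le (by exact_mod_cast Nat.le_succ n)
    have hbd' : ∀ k ≤ n, ∀ x ≥ (0:ℝ), |iteratedDerivWithin k f (Set.Ici 0) x| ≤ C * x ^ N :=
      fun k hk => hbd k (hk.trans (Nat.le_succ n))
    have ihs := ih f hfn C N hbd' s (by linarith [Nat.cast_nonneg (α := ℝ) n])
    have ihs1 := ih f hfn C N hbd' (s-1) (by linarith)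
    rw [hstep, ihs, ihs1, ← Finset.sum_sub_distrib,
      show n + 1 + 1 = n + 2 from rfl, alt_sum n (fun i => twistedMellin f (s - i))]
    refine Finset.sum_congr rfl fun i _ => ?_
    have : s - 1 - (i:ℝ) = s - ((i+1 : ℕ):ℝ) := by push_cast; ring
    rw [this]; ring

theorem stmt3 (f : ℝ → ℝ) (n : ℕ)
    (hf : ContDiffOn ℝ n f (Set.Ici 0))
    (C : ℝ) (N : ℕ)
    (hbd : ∀ k ≤ n, ∀ x ≥ (0:ℝ), |iteratedDerivWithin k f (Set.Ici 0) x| ≤ C * x ^ N)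
    (s : ℝ) (hs : (n : ℝ) ≤ s) :
    twistedMellin (iteratedDerivWithin n f (Set.Ici 0)) s =
      ∑ i ∈ Finset.range (n + 1),
        (-1 : ℝ) ^ i * (n.choose i) * twistedMellin f (s - i) := by
  exact aux_main n f hf C N hbd s hs
end

section
/- For a continuous function f of polynomial growth, s ≥ 1, and g(x) = ∫₀^x f(t) dt, the twisted Mellin transform satisfies Mg(s) = Mf(s) + Mg(s−1). -/
open MeasureTheory Set Real

/-- Integrability of `h x * x ^ p * exp (-x)` on `(0, ∞)` for `h` continuous on `[0,∞)`
with polynomial growth. -/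
lemma aux_integrable (h : ℝ → ℝ) (hc : ContinuousOn h (Set.Ici 0))
    (D : ℝ) (M : ℕ) (hb : ∀ x ≥ (0:ℝ), |h x| ≤ D * x ^ M) (p : ℝ) (hp : 0 ≤ p) :
    IntegrableOn (fun x => h x * x ^ p * Real.exp (-x)) (Set.Ioi 0) := by
  have hmeas : AEStronglyMeasurable (fun x => h x * x ^ p * Real.exp (-x))
      (volume.restrict (Set.Ioi (0:ℝ))) := by
    apply ContinuousOn.aestronglyMeasurable ?_ measurableSet_Ioi
    exact ((hc.mono Set.Ioi_subset_Ici_self).mul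
      (continuousOn_id.rpow_const (fun x hx => Or.inl (ne_of_gt hx)))).mul
      (Real.continuous_exp.comp continuous_neg).continuousOn
  have hint : IntegrableOn (fun x => D * (Real.exp (-x) * x ^ ((M:ℝ) + p)))
      (Set.Ioi (0:ℝ)) := by
    have h0 : (0:ℝ) < (M:ℝ) + p + 1 := by positivity
    have := (Real.GammaIntegral_convergent h0).const_mul D
    simp at this
    exact this
  refine hint.mono' hmeas ?_
  filter_upwards [ae_restrict_mem measurableSet_Ioi] with x hx
  have hx0 : (0:ℝ) < x := hx
  have h1 : ‖h x * x ^ p * Real.exp (-x)‖ = |h x| * x ^ p * Real.exp (-x) := by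
    rw [Real.norm_eq_abs, abs_mul, abs_mul, abs_of_nonneg (Real.rpow_nonneg hx0.le p),
      abs_of_nonneg (Real.exp_pos _).le]
  rw [h1]
  have h2 : |h x| * x ^ p * Real.exp (-x) ≤ (D * x ^ M) * x ^ p * Real.exp (-x) := by
    gcongr
    exact hb x hx0.le
  refine h2.trans (le_of_eq ?_)
  rw [← Real.rpow_natCast x M]
  rw [show D * x ^ (M:ℝ) * x ^ p * Real.exp (-x)
      = D * (Real.exp (-x) * (x ^ (M:ℝ) * x ^ p)) from by ring, ← Real.rpow_add hx0]

theorem stmt4 (f : ℝ → ℝ) (hf : ContinuousOn f (Set.Ici 0))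
    (C : ℝ) (N : ℕ) (hbd : ∀ x ≥ (0:ℝ), |f x| ≤ C * x ^ N)
    (s : ℝ) (hs : 1 ≤ s) :
    twistedMellin (fun x => ∫ t in (0:ℝ)..x, f t) s =
      twistedMellin f s + twistedMellin (fun x => ∫ t in (0:ℝ)..x, f t) (s - 1) := by
  set g : ℝ → ℝ := fun x => ∫ t in (0:ℝ)..x, f t with hgdef
  have hs0 : (0:ℝ) < s := lt_of_lt_of_le one_pos hs
  have hC : 0 ≤ C := by
    have := hbd 1 zero_le_one
    simpa using (abs_nonneg (f 1)).trans this
  -- interval integrability of f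
  have hfInt : ∀ x : ℝ, 0 ≤ x → IntervalIntegrable f volume 0 x := by
    intro x hx
    apply ContinuousOn.intervalIntegrable
    apply hf.mono
    rw [Set.uIcc_of_le hx]
    exact fun t ht => ht.1
  -- g vanishes at 0
  have hg0 : g 0 = 0 := intervalIntegral.integral_same
  -- bound on g
  have hgbd : ∀ x ≥ (0:ℝ), |g x| ≤ C * x ^ (N + 1) := by
    intro x hx
    have h1 : |g x| ≤ ∫ t in (0:ℝ)..x, |f t| :=
      intervalIntegral.abs_integral_le_integral_abs hx
    have h2 : (∫ t in (0:ℝ)..x, |f t|) ≤ ∫ t in (0:ℝ)..x, C * t ^ N := by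
      apply intervalIntegral.integral_mono_on hx
      · exact (hfInt x hx).abs
      · exact (continuous_const.mul (continuous_pow N)).intervalIntegrable 0 x
      · intro t ht
        exact hbd t ht.1
    have h3 : (∫ t in (0:ℝ)..x, C * t ^ N) = C * (x ^ (N + 1) / (N + 1)) := by
      rw [intervalIntegral.integral_const_mul, integral_pow]
      ring
    have h4 : C * (x ^ (N + 1) / (N + 1)) ≤ C * x ^ (N + 1) := by
      apply mul_le_mul_of_nonneg_left _ hC
      apply div_le_self (pow_nonneg hx _)
      exact_mod_cast Nat.one_le_iff_ne_zero.mpr (Nat.succ_ne_zero N)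
    calc |g x| ≤ ∫ t in (0:ℝ)..x, |f t| := h1
      _ ≤ ∫ t in (0:ℝ)..x, C * t ^ N := h2
      _ = C * (x ^ (N + 1) / (N + 1)) := h3
      _ ≤ C * x ^ (N + 1) := h4
  -- continuity of g on [0,∞)
  have hg_cont : ContinuousOn g (Set.Ici 0) := by
    intro x hx
    have hx0 : (0:ℝ) ≤ x := hx
    have hcc : ContinuousOn g (Set.uIcc (0:ℝ) (x + 1)) :=
      intervalIntegral.continuousOn_primitive_interval'
        (hfInt (x + 1) (by linarith)) Set.left_mem_uIcc
    have hIcc : Set.uIcc (0:ℝ) (x + 1) = Set.Icc 0 (x + 1) :=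
      Set.uIcc_of_le (by linarith)
    rw [hIcc] at hcc
    have hxmem : x ∈ Set.Icc (0:ℝ) (x + 1) := ⟨hx0, by linarith⟩
    have := hcc x hxmem
    apply this.mono_of_mem_nhdsWithin
    have : Set.Ici (0:ℝ) ∩ Set.Iic (x + 1) ∈ nhdsWithin x (Set.Ici 0) :=
      inter_mem_nhdsWithin _ (Iic_mem_nhds (by linarith))
    exact Filter.mem_of_superset this (by rw [Set.Ici_inter_Iic])
  -- integrability of the three pieces
  have hIf : IntegrableOn (fun x => f x * x ^ s * Real.exp (-x)) (Set.Ioi 0) :=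
    aux_integrable f hf C N hbd s hs0.le
  have hIg1 : IntegrableOn (fun x => g x * x ^ (s - 1) * Real.exp (-x)) (Set.Ioi 0) :=
    aux_integrable g hg_cont C (N + 1) hgbd (s - 1) (by linarith)
  have hIg2 : IntegrableOn (fun x => g x * x ^ s * Real.exp (-x)) (Set.Ioi 0) :=
    aux_integrable g hg_cont C (N + 1) hgbd s hs0.le
  -- the derivative identity
  have hderiv : ∀ x ∈ Set.Ioi (0:ℝ),
      HasDerivAt (fun x => g x * x ^ s * Real.exp (-x))
        (f x * x ^ s * Real.exp (-x) +
          (s * (g x * x ^ (s - 1) * Real.exp (-x)) - g x * x ^ s * Real.exp (-x))) x := by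
    intro x hx
    have hx0 : (0:ℝ) < x := hx
    have hg' : HasDerivAt g (f x) x := by
      apply intervalIntegral.integral_hasDerivAt_right (hfInt x hx0.le)
      · exact ⟨Set.Ici 0, Ici_mem_nhds hx0, hf.aestronglyMeasurable measurableSet_Ici⟩
      · exact hf.continuousAt (Ici_mem_nhds hx0)
    have hrpow : HasDerivAt (fun y : ℝ => y ^ s) (s * x ^ (s - 1)) x :=
      Real.hasDerivAt_rpow_const (Or.inl (ne_of_gt hx0))
    have hexp : HasDerivAt (fun y : ℝ => Real.exp (-y)) (Real.exp (-x) * (-1)) x :=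
      (hasDerivAt_neg x).exp
    have := (hg'.mul hrpow).mul hexp
    refine this.congr_deriv ?_
    simp only [Pi.mul_apply]
    ring
  -- continuity at 0 from the right
  have hFcont : ContinuousWithinAt (fun x => g x * x ^ s * Real.exp (-x)) (Set.Ici 0) 0 := by
    apply ContinuousWithinAt.mul
    apply ContinuousWithinAt.mul
    · exact hg_cont 0 Set.self_mem_Ici
    · exact (Real.continuousAt_rpow_const 0 s (Or.inr hs0.le)).continuousWithinAt
    · exact ((Real.continuous_exp.comp continuous_neg).continuousAt).continuousWithinAt
  -- tends to 0 at infinity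
  have hFlim : Filter.Tendsto (fun x => g x * x ^ s * Real.exp (-x))
      Filter.atTop (nhds 0) := by
    have hnorm : Filter.Tendsto (fun x => ‖g x * x ^ s * Real.exp (-x)‖)
        Filter.atTop (nhds 0) := by
      refine squeeze_zero' (Filter.Eventually.of_forall fun x => norm_nonneg _)
        (g := fun x => C * (x ^ ((N:ℝ) + 1 + s) * Real.exp (-(1:ℝ) * x))) ?_ ?_
      · filter_upwards [Filter.eventually_ge_atTop (1:ℝ)] with x hx1
        have hx0 : (0:ℝ) < x := lt_of_lt_of_le one_pos hx1
        have h1 : ‖g x * x ^ s * Real.exp (-x)‖ = |g x| * x ^ s * Real.exp (-x) := by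
          rw [Real.norm_eq_abs, abs_mul, abs_mul, abs_of_nonneg (Real.rpow_nonneg hx0.le s),
            abs_of_nonneg (Real.exp_pos _).le]
        rw [h1]
        have h2 : |g x| * x ^ s * Real.exp (-x) ≤ (C * x ^ (N + 1)) * x ^ s * Real.exp (-x) := by
          gcongr
          exact hgbd x hx0.le
        refine h2.trans (le_of_eq ?_)
        have hsplitpow : x ^ ((N:ℝ) + 1 + s) = x ^ (N + 1) * x ^ s := by
          rw [← Real.rpow_natCast x (N + 1), ← Real.rpow_add hx0]
          congr 1
          push_cast
          ring
        rw [hsplitpow, neg_one_mul]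
        ring
      · have := (tendsto_rpow_mul_exp_neg_mul_atTop_nhds_zero ((N:ℝ) + 1 + s) 1 one_pos).const_mul C
        simpa using this
    exact tendsto_zero_iff_norm_tendsto_zero.mpr hnorm
  -- integration by parts
  have hφint : IntegrableOn (fun x => f x * x ^ s * Real.exp (-x) +
      (s * (g x * x ^ (s - 1) * Real.exp (-x)) - g x * x ^ s * Real.exp (-x)))
      (Set.Ioi 0) := by
    exact hIf.add ((hIg1.const_mul s).sub hIg2)
  have key : (∫ x in Set.Ioi (0:ℝ), (f x * x ^ s * Real.exp (-x) +
      (s * (g x * x ^ (s - 1) * Real.exp (-x)) - g x * x ^ s * Real.exp (-x)))) = 0 := by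
    have := integral_Ioi_of_hasDerivAt_of_tendsto hFcont hderiv hφint hFlim
    rw [this]
    simp [hg0]
  have e1 : (∫ x in Set.Ioi (0:ℝ), (f x * x ^ s * Real.exp (-x) +
      (s * (g x * x ^ (s - 1) * Real.exp (-x)) - g x * x ^ s * Real.exp (-x))))
      = (∫ x in Set.Ioi (0:ℝ), f x * x ^ s * Real.exp (-x)) +
        ∫ x in Set.Ioi (0:ℝ), (s * (g x * x ^ (s - 1) * Real.exp (-x)) -
          g x * x ^ s * Real.exp (-x)) :=
    integral_add hIf ((hIg1.const_mul s).sub hIg2)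
  have e2 : (∫ x in Set.Ioi (0:ℝ), (s * (g x * x ^ (s - 1) * Real.exp (-x)) -
        g x * x ^ s * Real.exp (-x)))
      = (∫ x in Set.Ioi (0:ℝ), s * (g x * x ^ (s - 1) * Real.exp (-x))) -
        ∫ x in Set.Ioi (0:ℝ), g x * x ^ s * Real.exp (-x) :=
    integral_sub (hIg1.const_mul s) hIg2
  have e3 : (∫ x in Set.Ioi (0:ℝ), s * (g x * x ^ (s - 1) * Real.exp (-x)))
      = s * ∫ x in Set.Ioi (0:ℝ), g x * x ^ (s - 1) * Real.exp (-x) :=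
    integral_const_mul s _
  -- finish with algebra
  have hGamma : Real.Gamma (s + 1) = s * Real.Gamma s := Real.Gamma_add_one (ne_of_gt hs0)
  have hGs : Real.Gamma s ≠ 0 := ne_of_gt (Real.Gamma_pos_of_pos hs0)
  simp only [twistedMellin, ← hgdef]
  rw [sub_add_cancel, hGamma]
  set A := ∫ x in Set.Ioi (0:ℝ), f x * x ^ s * Real.exp (-x) with hA
  set B := ∫ x in Set.Ioi (0:ℝ), g x * x ^ (s - 1) * Real.exp (-x) with hB
  set D := ∫ x in Set.Ioi (0:ℝ), g x * x ^ s * Real.exp (-x) with hDdef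
  rw [e1, e2, e3] at key
  have hD : D = A + s * B := by linarith
  have hsne : s ≠ 0 := ne_of_gt hs0
  rw [hD]
  field_simp
end

section
/- For a continuous function f of polynomial growth, a natural number n, and g(x) = ∫₀^x f(t) dt, we have Mg(n) = Σ_{i=0}^n Mf(i). -/
open MeasureTheory Set Real
open Filter

-- integrability of h x * x^m * exp(-x) on Ioi 0 given poly bound
lemma tm_int (h : ℝ → ℝ) (hc : ContinuousOn h (Set.Ioi 0))
    {C : ℝ} {M : ℕ} (hb : ∀ x > (0:ℝ), |h x| ≤ C * x ^ M) (m : ℕ) :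
    IntegrableOn (fun x => h x * x ^ m * Real.exp (-x)) (Set.Ioi 0) := by
  have hmaj : IntegrableOn (fun x => C * (x ^ (M + m) * Real.exp (-x))) (Set.Ioi 0) := by
    refine (Integrable.const_mul ?_ C)
    have := (Real.GammaIntegral_convergent (s := (M + m + 1 : ℝ)) (by positivity))
    refine this.congr_fun ?_ measurableSet_Ioi
    intro x hx
    have e : ((M:ℝ) + m + 1 - 1) = ((M + m : ℕ) : ℝ) := by push_cast; ring
    simp only [e, Real.rpow_natCast]
    ring
  refine hmaj.integrable.mono' ?_ ?_
  · exact ((hc.mul (continuousOn_pow m)).mul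
      (Real.continuous_exp.comp continuous_neg).continuousOn).aestronglyMeasurable
      measurableSet_Ioi
  · filter_upwards [ae_restrict_mem measurableSet_Ioi] with x hx
    have hx0 : (0:ℝ) < x := hx
    have h1 : |h x * x ^ m * Real.exp (-x)| = |h x| * x ^ m * Real.exp (-x) := by
      rw [abs_mul, abs_mul, abs_of_nonneg (pow_nonneg hx0.le m),
        abs_of_nonneg (Real.exp_pos _).le]
    rw [Real.norm_eq_abs, h1]
    calc |h x| * x ^ m * Real.exp (-x) ≤ (C * x ^ M) * x ^ m * Real.exp (-x) := by
          gcongr; exact hb x hx0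
      _ = C * (x ^ (M + m) * Real.exp (-x)) := by rw [pow_add]; ring


lemma tm_C_nonneg (f : ℝ → ℝ) {C : ℝ} {N : ℕ} (hbd : ∀ x ≥ (0:ℝ), |f x| ≤ C * x ^ N) :
    0 ≤ C := by
  have := hbd 1 zero_le_one
  simpa using (abs_nonneg (f 1)).trans this

lemma tm_g_deriv (f : ℝ → ℝ) (hf : ContinuousOn f (Set.Ici 0)) :
    ∀ x ∈ Set.Ioi (0:ℝ), HasDerivAt (fun x => ∫ t in (0:ℝ)..x, f t) (f x) x := by
  intro x hx
  have hx0 : (0:ℝ) < x := hx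
  refine intervalIntegral.integral_hasDerivAt_right ?_ ?_ ?_
  · refine (hf.mono ?_).intervalIntegrable
    rw [Set.uIcc_of_le hx0.le]
    exact fun t ht => ht.1
  · exact (hf.mono (Set.Ioi_subset_Ici le_rfl)).stronglyMeasurableAtFilter isOpen_Ioi x hx
  · exact ((hf.mono (Set.Ioi_subset_Ici le_rfl)).continuousAt (Ioi_mem_nhds hx0))

lemma tm_g_bound (f : ℝ → ℝ) {C : ℝ} {N : ℕ} (hbd : ∀ x ≥ (0:ℝ), |f x| ≤ C * x ^ N) :
    ∀ x ≥ (0:ℝ), |∫ t in (0:ℝ)..x, f t| ≤ C * x ^ (N + 1) := by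
  intro x hx
  have hC : 0 ≤ C := tm_C_nonneg f hbd
  have h2 : (∫ t in (0:ℝ)..x, C * t ^ N) = C * (x ^ (N + 1) / (N + 1)) := by
    rw [intervalIntegral.integral_const_mul, integral_pow]
    ring
  have h1 : |∫ t in (0:ℝ)..x, f t| ≤ |∫ t in (0:ℝ)..x, C * t ^ N| := by
    rw [← Real.norm_eq_abs]
    refine intervalIntegral.norm_integral_le_abs_of_norm_le ?_ ?_
    · filter_upwards [ae_restrict_mem measurableSet_uIoc] with t ht
      have : (0:ℝ) ≤ t := by
        rcases Set.uIoc_of_le hx ▸ ht with ⟨ha, hb⟩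
        exact ha.le
      exact hbd t this
    · exact (Continuous.intervalIntegrable (by continuity) 0 x)
  have hN1 : (1:ℝ) ≤ (N:ℝ) + 1 := by
    have : (0:ℝ) ≤ (N:ℝ) := Nat.cast_nonneg N
    linarith
  have hxp : (0:ℝ) ≤ x ^ (N+1) := pow_nonneg hx _
  calc |∫ t in (0:ℝ)..x, f t| ≤ |C * (x ^ (N + 1) / (N + 1))| := h2 ▸ h1
    _ = C * (x ^ (N + 1) / (N + 1)) := abs_of_nonneg (by positivity)
    _ ≤ C * x ^ (N + 1) := by
        refine mul_le_mul_of_nonneg_left ?_ hC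
        calc x ^ (N+1) / ((N:ℝ)+1) ≤ x ^ (N+1) / 1 := by gcongr
          _ = x ^ (N+1) := div_one _

lemma tm_rec (f : ℝ → ℝ) (hf : ContinuousOn f (Set.Ici 0))
    {C : ℝ} {N : ℕ} (hbd : ∀ x ≥ (0:ℝ), |f x| ≤ C * x ^ N) (n : ℕ) :
    ∫ x in Set.Ioi (0:ℝ), (∫ t in (0:ℝ)..x, f t) * x ^ n * Real.exp (-x)
      = (∫ x in Set.Ioi (0:ℝ), f x * x ^ n * Real.exp (-x))
        + n * ∫ x in Set.Ioi (0:ℝ), (∫ t in (0:ℝ)..x, f t) * x ^ (n-1) * Real.exp (-x) := by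
  set g : ℝ → ℝ := fun x => ∫ t in (0:ℝ)..x, f t with hg
  have hC : 0 ≤ C := tm_C_nonneg f hbd
  have hgd := tm_g_deriv f hf
  have hgc : ContinuousOn g (Set.Ioi 0) :=
    fun x hx => (hgd x hx).continuousAt.continuousWithinAt
  have hgb := tm_g_bound f hbd
  set F : ℝ → ℝ := fun x => g x * x ^ n * Real.exp (-x) with hF
  set F' : ℝ → ℝ := fun x =>
    (f x * x ^ n * Real.exp (-x) + (n:ℝ) * (g x * x ^ (n-1) * Real.exp (-x)))
      - g x * x ^ n * Real.exp (-x) with hF'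
  -- integrability pieces
  have If : IntegrableOn (fun x => f x * x ^ n * Real.exp (-x)) (Set.Ioi 0) :=
    tm_int f (hf.mono (Set.Ioi_subset_Ici le_rfl)) (fun x hx => hbd x hx.le) n
  have Ig1 : IntegrableOn (fun x => g x * x ^ (n-1) * Real.exp (-x)) (Set.Ioi 0) :=
    tm_int g hgc (fun x hx => hgb x hx.le) (n-1)
  have Ig2 : IntegrableOn (fun x => g x * x ^ n * Real.exp (-x)) (Set.Ioi 0) :=
    tm_int g hgc (fun x hx => hgb x hx.le) n
  have f'int : IntegrableOn F' (Set.Ioi 0) :=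
    (If.add (Ig1.const_mul _)).sub Ig2
  -- derivative
  have hderiv : ∀ x ∈ Set.Ioi (0:ℝ), HasDerivAt F (F' x) x := by
    intro x hx
    have h1 := hgd x hx
    have h2 : HasDerivAt (fun y : ℝ => y ^ n) ((n:ℝ) * x ^ (n-1)) x := hasDerivAt_pow n x
    have h3 : HasDerivAt (fun y : ℝ => Real.exp (-y)) (-Real.exp (-x)) x := by
      simpa using (hasDerivAt_neg x).exp
    have h4 : HasDerivAt (fun y => (∫ t in (0:ℝ)..y, f t) * y ^ n * Real.exp (-y)) _ x :=
      (h1.fun_mul h2).mul h3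
    convert h4 using 1
    simp only [hF']
    ring
  -- the squeeze bound
  have hbound : ∀ x ≥ (0:ℝ), ‖F x‖ ≤ C * (x ^ (N + 1 + n) * Real.exp (-x)) := by
    intro x hx
    have : ‖F x‖ = |g x| * x ^ n * Real.exp (-x) := by
      simp only [hF, Real.norm_eq_abs, abs_mul, abs_of_nonneg (pow_nonneg hx n),
        abs_of_nonneg (Real.exp_pos _).le]
    rw [this]
    calc |g x| * x ^ n * Real.exp (-x) ≤ (C * x ^ (N+1)) * x ^ n * Real.exp (-x) := by
          gcongr; exact hgb x hx
      _ = C * (x ^ (N + 1 + n) * Real.exp (-x)) := by rw [pow_add]; ring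
  have hF0 : F 0 = 0 := by
    simp [hF, hg, intervalIntegral.integral_same]
  -- continuity at 0 from the right
  have hcont : ContinuousWithinAt F (Set.Ici 0) 0 := by
    have hB : Filter.Tendsto (fun x => C * (x ^ (N + 1 + n) * Real.exp (-x)))
        (nhdsWithin 0 (Set.Ici 0)) (nhds 0) := by
      have hc : Continuous fun x : ℝ => C * (x ^ (N + 1 + n) * Real.exp (-x)) := by
        continuity
      have := (hc.tendsto 0).mono_left (nhdsWithin_le_nhds (s := Set.Ici 0))
      simpa using this
    unfold ContinuousWithinAt
    rw [hF0]
    refine squeeze_zero_norm' ?_ hB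
    filter_upwards [self_mem_nhdsWithin] with x hx
    exact hbound x hx
  -- limit at infinity
  have htop : Filter.Tendsto F Filter.atTop (nhds 0) := by
    have hB : Filter.Tendsto (fun x => C * (x ^ (N + 1 + n) * Real.exp (-x)))
        Filter.atTop (nhds 0) := by
      have := (tendsto_const_nhds (x := C)).mul
        (tendsto_pow_mul_exp_neg_atTop_nhds_zero (N + 1 + n))
      simpa using this
    refine squeeze_zero_norm' ?_ hB
    filter_upwards [Filter.eventually_ge_atTop (0:ℝ)] with x hx
    exact hbound x hx
  have key := integral_Ioi_of_hasDerivAt_of_tendsto hcont hderiv f'int htop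
  rw [hF0, sub_zero] at key
  have e1 : (∫ x in Set.Ioi (0:ℝ), F' x)
      = ((∫ x in Set.Ioi (0:ℝ), f x * x ^ n * Real.exp (-x))
          + (n:ℝ) * ∫ x in Set.Ioi (0:ℝ), g x * x ^ (n-1) * Real.exp (-x))
        - ∫ x in Set.Ioi (0:ℝ), g x * x ^ n * Real.exp (-x) := by
    have Iadd : IntegrableOn (fun x => f x * x ^ n * Real.exp (-x)
        + (n:ℝ) * (g x * x ^ (n-1) * Real.exp (-x))) (Set.Ioi 0) :=
      If.add (Ig1.const_mul _)
    simp only [hF']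
    rw [integral_sub Iadd Ig2, integral_add If (Ig1.const_mul _), integral_const_mul]
  rw [key] at e1
  have : (∫ x in Set.Ioi (0:ℝ), g x * x ^ n * Real.exp (-x))
      = (∫ x in Set.Ioi (0:ℝ), f x * x ^ n * Real.exp (-x))
        + (n:ℝ) * ∫ x in Set.Ioi (0:ℝ), g x * x ^ (n-1) * Real.exp (-x) := by
    linarith
  exact this


lemma tm_main (f : ℝ → ℝ) (hf : ContinuousOn f (Set.Ici 0))
    {C : ℝ} {N : ℕ} (hbd : ∀ x ≥ (0:ℝ), |f x| ≤ C * x ^ N) : ∀ n : ℕ,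
    (∫ x in Set.Ioi (0:ℝ), (∫ t in (0:ℝ)..x, f t) * x ^ n * Real.exp (-x)) / (n.factorial : ℝ)
      = ∑ i ∈ Finset.range (n + 1),
        (∫ x in Set.Ioi (0:ℝ), f x * x ^ i * Real.exp (-x)) / (i.factorial : ℝ) := by
  intro n
  induction n with
  | zero =>
      have h := tm_rec f hf hbd 0
      simp only [Nat.cast_zero, zero_mul, add_zero, pow_zero, mul_one] at h
      simp [h]
  | succ n ih =>
      have h := tm_rec f hf hbd (n + 1)
      simp only [Nat.add_sub_cancel] at h
      rw [Finset.sum_range_succ, ← ih, h]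
      have hfact : ((n+1).factorial : ℝ) = ((n:ℝ) + 1) * (n.factorial : ℝ) := by
        rw [Nat.factorial_succ]; push_cast; ring
      have h1 : (n.factorial : ℝ) ≠ 0 := Nat.cast_ne_zero.mpr n.factorial_ne_zero
      have h2 : ((n:ℝ) + 1) ≠ 0 := by positivity
      rw [hfact]
      field_simp
      push_cast
      ring

theorem stmt5 (f : ℝ → ℝ) (hf : ContinuousOn f (Set.Ici 0))
    (C : ℝ) (N : ℕ) (hbd : ∀ x ≥ (0:ℝ), |f x| ≤ C * x ^ N)
    (n : ℕ) :
    twistedMellin (fun x => ∫ t in (0:ℝ)..x, f t) n =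
      ∑ i ∈ Finset.range (n + 1), twistedMellin f i := by
  simp only [twistedMellin, Real.rpow_natCast, Real.Gamma_nat_eq_factorial]
  exact tm_main f hf hbd n
end

section
/- If f is continuous on [0,∞) and |f(x)| ≤ C x^N for a natural number N and all x ≥ 0, then there is a constant C' such that |Mf(s)| ≤ C' (1+s)^N for all s ≥ 0. -/
open MeasureTheory Set Real

lemma gamma_ratio_bound (N : ℕ) : ∀ s : ℝ, 0 ≤ s →
    Real.Gamma (s + N + 1) ≤ N.factorial * (1 + s) ^ N * Real.Gamma (s + 1) := by
  induction N with
  | zero => intro s hs; simp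
  | succ N ih =>
    intro s hs
    have h1 : (s + (N + 1 : ℕ) + 1 : ℝ) = (s + N + 1) + 1 := by push_cast; ring
    rw [h1, Real.Gamma_add_one (by positivity)]
    have h2 := ih s hs
    have hle : (s + N + 1 : ℝ) ≤ (N + 1) * (1 + s) := by nlinarith [Nat.cast_nonneg (α := ℝ) N]
    have hGN : 0 ≤ Real.Gamma (s + N + 1) := le_of_lt (Real.Gamma_pos_of_pos (by positivity))
    calc (s + N + 1) * Real.Gamma (s + N + 1)
        ≤ ((N + 1) * (1 + s)) * (N.factorial * (1 + s) ^ N * Real.Gamma (s + 1)) := by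
          apply mul_le_mul hle h2 hGN (by positivity)
      _ = (N + 1).factorial * (1 + s) ^ (N + 1) * Real.Gamma (s + 1) := by
          rw [Nat.factorial_succ]; push_cast; ring

theorem stmt6 (f : ℝ → ℝ) (hf : ContinuousOn f (Set.Ici 0))
    (C : ℝ) (N : ℕ) (hbd : ∀ x ≥ (0:ℝ), |f x| ≤ C * x ^ N) :
    ∃ C' : ℝ, ∀ s ≥ (0:ℝ), |twistedMellin f s| ≤ C' * (1 + s) ^ N := by
  have hC : 0 ≤ C := by
    have h := hbd 1 (by norm_num)
    simpa using le_trans (abs_nonneg _) h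
  refine ⟨C * N.factorial, fun s hs => ?_⟩
  have hs1 : (0:ℝ) < s + 1 := by linarith
  have hGpos : 0 < Real.Gamma (s + 1) := Real.Gamma_pos_of_pos hs1
  set g : ℝ → ℝ := fun x => f x * x ^ s * Real.exp (-x) with hg
  have hdom : IntegrableOn (fun x => C * (Real.exp (-x) * x ^ (s + N))) (Ioi 0) := by
    have h := (Real.GammaIntegral_convergent (s := s + N + 1) (by positivity)).const_mul C
    simp only [add_sub_cancel_right] at h
    exact h
  have hbd' : ∀ x ∈ Ioi (0:ℝ), ‖g x‖ ≤ C * (Real.exp (-x) * x ^ (s + N)) := by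
    intro x hx
    have hx0 : (0:ℝ) < x := hx
    have h1 : |f x| ≤ C * x ^ N := hbd x hx0.le
    have hxs : (0:ℝ) ≤ x ^ s := Real.rpow_nonneg hx0.le s
    have heq : ‖g x‖ = |f x| * x ^ s * Real.exp (-x) := by
      rw [hg]
      simp [abs_mul, abs_of_nonneg hxs, abs_of_nonneg (Real.exp_nonneg _)]
    rw [heq, Real.rpow_add hx0, Real.rpow_natCast]
    nlinarith [Real.exp_nonneg (-x), pow_nonneg hx0.le N, hxs, abs_nonneg (f x),
      mul_le_mul_of_nonneg_right (mul_le_mul_of_nonneg_right h1 hxs) (Real.exp_nonneg (-x))]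
  have hI : |∫ x in Ioi (0:ℝ), g x| ≤ C * Real.Gamma (s + N + 1) := by
    have h1 : ‖∫ x in Ioi (0:ℝ), g x‖ ≤ ∫ x in Ioi (0:ℝ), C * (Real.exp (-x) * x ^ (s + N)) :=
      norm_integral_le_of_norm_le hdom
        ((ae_restrict_iff' measurableSet_Ioi).2 (ae_of_all _ hbd'))
    have h2 : (∫ x in Ioi (0:ℝ), C * (Real.exp (-x) * x ^ (s + N)))
        = C * Real.Gamma (s + N + 1) := by
      rw [integral_const_mul, Real.Gamma_eq_integral (by positivity)]
      norm_num
    rw [h2] at h1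
    simpa using h1
  have hrat := gamma_ratio_bound N s hs
  rw [twistedMellin, abs_div, abs_of_pos hGpos, div_le_iff₀ hGpos]
  have hfact : (0:ℝ) ≤ (N.factorial : ℝ) := Nat.cast_nonneg _
  calc |∫ x in Ioi (0:ℝ), f x * x ^ s * Real.exp (-x)|
      ≤ C * Real.Gamma (s + N + 1) := hI
    _ ≤ C * (N.factorial * (1 + s) ^ N * Real.Gamma (s + 1)) :=
        mul_le_mul_of_nonneg_left hrat hC
    _ = C * N.factorial * (1 + s) ^ N * Real.Gamma (s + 1) := by ring
end

section
/- For the Todd function f(x) = x/(1 − e^{-x}) and s > 0, the twisted Mellin transform is Mf(s) = (s+1) ζ(s+2). -/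
open MeasureTheory Set Real

theorem stmt12 (s : ℝ) (hs : 0 < s) :
    (twistedMellin (fun x => x / (1 - Real.exp (-x))) s : ℂ) =
      (s + 1) * riemannZeta (s + 2) := by
  set F : ℝ → ℂ := fun t => ((Real.exp (-t) / (1 - Real.exp (-t)) : ℝ) : ℂ) with hF_def
  have hre : (1 : ℝ) < ((s : ℂ) + 2).re := by
    simp only [Complex.add_re, Complex.ofReal_re]
    norm_num; linarith
  have hp : ∀ n : ℕ, (1 : ℂ) = 0 ∨ (0 : ℝ) < (n : ℝ) + 1 := fun n => Or.inr (by positivity)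
  have hF : ∀ t ∈ Ioi (0:ℝ), HasSum
      (fun n : ℕ => (1:ℂ) * ((Real.exp (-((n:ℝ)+1) * t) : ℝ) : ℂ)) (F t) := by
    intro t ht
    have ht' : 0 < t := ht
    have hr : |Real.exp (-t)| < 1 := by
      rw [abs_of_pos (Real.exp_pos _)]
      exact Real.exp_lt_one_iff.mpr (by linarith)
    have hgeo : HasSum (fun n : ℕ => Real.exp (-t) ^ n) (1 / (1 - Real.exp (-t))) := by
      simpa [one_div] using hasSum_geometric_of_abs_lt_one hr
    have key := Complex.hasSum_ofReal.mpr (hgeo.mul_left (Real.exp (-t)))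
    have heq : (fun n : ℕ => (1:ℂ) * ((Real.exp (-((n:ℝ)+1) * t) : ℝ) : ℂ))
        = fun n : ℕ => ((Real.exp (-t) * Real.exp (-t) ^ n : ℝ) : ℂ) := by
      funext n
      rw [one_mul]
      congr 1
      rw [← Real.exp_nat_mul, ← Real.exp_add]
      congr 1
      ring
    have hval : F t = ((Real.exp (-t) * (1 / (1 - Real.exp (-t))) : ℝ) : ℂ) := by
      simp [hF_def, div_eq_mul_inv, one_div]
    rw [heq, hval]
    exact key
  have h_sum : Summable fun n : ℕ => ‖(1:ℂ)‖ / ((n:ℝ) + 1) ^ ((s:ℂ)+2).re := by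
    simp only [norm_one]
    have h1 : Summable fun n : ℕ => 1 / ((n:ℝ)) ^ ((s:ℂ)+2).re :=
      Real.summable_one_div_nat_rpow.mpr hre
    have h2 := (summable_nat_add_iff 1).mpr h1
    convert h2 using 2 with n
    push_cast
    · rfl
    push_cast
    ring_nf
  have H := hasSum_mellin (F := F) hp (by linarith [hre] : (0:ℝ) < ((s:ℂ)+2).re) hF h_sum
  have hmel : mellin F ((s:ℂ)+2) =
      ((∫ x in Set.Ioi (0:ℝ), x / (1 - Real.exp (-x)) * x ^ s * Real.exp (-x) : ℝ) : ℂ) := by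
    rw [mellin]
    have hint : (∫ t in Set.Ioi (0:ℝ), (t:ℂ) ^ ((s:ℂ)+2-1) • F t)
        = ∫ t in Set.Ioi (0:ℝ),
            ((t / (1 - Real.exp (-t)) * t ^ s * Real.exp (-t) : ℝ) : ℂ) := by
      refine setIntegral_congr_fun measurableSet_Ioi (fun t ht => ?_)
      have ht' : (0:ℝ) < t := ht
      have h1 : ((s:ℂ) + 2 - 1) = ((s + 1 : ℝ) : ℂ) := by push_cast; ring
      rw [h1, smul_eq_mul, ← Complex.ofReal_cpow ht'.le, hF_def, ← Complex.ofReal_mul]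
      congr 1
      rw [Real.rpow_add ht', Real.rpow_one]
      have hne : 1 - Real.exp (-t) ≠ 0 := by
        have : Real.exp (-t) < 1 := Real.exp_lt_one_iff.mpr (by linarith)
        linarith
      field_simp
    rw [hint]
    exact integral_ofReal
  have hzeta : riemannZeta ((s:ℂ)+2) = ∑' n : ℕ, 1 / ((n:ℂ) + 1) ^ ((s:ℂ)+2) :=
    zeta_eq_tsum_one_div_nat_add_one_cpow hre
  have hsum_eq : mellin F ((s:ℂ)+2) = Complex.Gamma ((s:ℂ)+2) * riemannZeta ((s:ℂ)+2) := by
    rw [← H.tsum_eq, hzeta, ← tsum_mul_left]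
    congr 1 with n
    push_cast
    ring
  have hG1 : (0:ℝ) < Real.Gamma (s+1) := Real.Gamma_pos_of_pos (by linarith)
  have hGc : ((Real.Gamma (s+1) : ℝ) : ℂ) = Complex.Gamma ((s:ℂ)+1) := by
    rw [← Complex.Gamma_ofReal, Complex.ofReal_add, Complex.ofReal_one]
  have hG2 : Complex.Gamma ((s:ℂ)+2) = ((s:ℂ)+1) * Complex.Gamma ((s:ℂ)+1) := by
    have h := Complex.Gamma_add_one ((s:ℂ)+1) (by
      intro h
      have h2 := congrArg Complex.re h
      simp at h2; linarith)
    rw [show (s:ℂ)+1+1 = (s:ℂ)+2 by ring] at h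
    exact h
  have hGne : Complex.Gamma ((s:ℂ)+1) ≠ 0 := by
    rw [← hGc]
    exact_mod_cast hG1.ne'
  rw [twistedMellin, Complex.ofReal_div, ← hmel, hsum_eq, hG2, hGc]
  field_simp
end

section
/- For f(x) = sin x and s ≥ 0, we have Mf(s) = 2^{-(s+1)/2} sin((s+1)π/4); for g(x) = cos x, Mg(s) = 2^{-(s+1)/2} cos((s+1)π/4). -/
open MeasureTheory Set Real

lemma aux_int {t c : ℝ} (ht : -1 < t) (hc : 0 < c) :
    IntegrableOn (fun x : ℝ => x ^ t * Real.exp (-c * x)) (Ioi 0) := by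
  have := integrableOn_rpow_mul_exp_neg_mul_rpow ht one_pos hc
  simpa [Real.rpow_one] using this

lemma aux_meas (s : ℝ) (z : ℂ) :
    AEStronglyMeasurable (fun x : ℝ => (x:ℂ) ^ (s:ℂ) * Complex.exp (-(z * x)))
      (volume.restrict (Ioi 0)) := by
  apply ContinuousOn.aestronglyMeasurable _ measurableSet_Ioi
  apply ContinuousOn.mul
  · exact Complex.continuous_ofReal.continuousOn.cpow continuousOn_const
      (fun x hx => Or.inl (by exact_mod_cast (mem_Ioi.mp hx)))
  · exact (Complex.continuous_exp.comp (by fun_prop)).continuousOn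

lemma aux_int' {s : ℝ} (hs : 0 ≤ s) {z : ℂ} (hz : 0 < z.re) :
    IntegrableOn (fun x : ℝ => (x:ℂ) ^ (s:ℂ) * Complex.exp (-(z * x))) (Ioi 0) := by
  apply Integrable.mono' (aux_int (by linarith : (-1:ℝ) < s) hz) (aux_meas s z)
  filter_upwards [ae_restrict_mem measurableSet_Ioi] with x hx
  rw [mem_Ioi] at hx
  rw [norm_mul,
    Complex.norm_cpow_eq_rpow_re_of_pos hx, Complex.norm_exp]
  simp only [Complex.ofReal_re, Complex.neg_re, Complex.mul_re, Complex.ofReal_im]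
  ring_nf
  exact le_refl _

lemma aux_deriv {s : ℝ} (hs : 0 ≤ s) {z₀ : ℂ} (hz : 0 < z₀.re) :
    DifferentiableAt ℂ (fun z : ℂ => ∫ x : ℝ in Ioi 0, (x:ℂ) ^ (s:ℂ) * Complex.exp (-(z * x))) z₀ := by
  set ε := z₀.re / 2 with hε
  have hεpos : 0 < ε := by positivity
  have key := hasDerivAt_integral_of_dominated_loc_of_deriv_le (μ := volume.restrict (Ioi 0))
    (F := fun (z : ℂ) (x : ℝ) => (x:ℂ) ^ (s:ℂ) * Complex.exp (-(z * x)))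
    (F' := fun (z : ℂ) (x : ℝ) => (x:ℂ) ^ (s:ℂ) * (Complex.exp (-(z * x)) * (-(x:ℂ))))
    (x₀ := z₀) (bound := fun x : ℝ => x ^ (s + 1) * Real.exp (-ε * x)) (Metric.ball_mem_nhds z₀ hεpos)
    (Filter.Eventually.of_forall fun z => aux_meas s z) (aux_int' hs hz)
    ?_ ?_ (aux_int (by linarith) hεpos) ?_
  · exact key.2.differentiableAt
  · -- measurability of F' z₀
    apply ContinuousOn.aestronglyMeasurable _ measurableSet_Ioi
    apply ContinuousOn.mul
    · exact Complex.continuous_ofReal.continuousOn.cpow continuousOn_const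
        (fun x hx => Or.inl (by exact_mod_cast (mem_Ioi.mp hx)))
    · exact ((Complex.continuous_exp.comp (by fun_prop)).mul (by fun_prop)).continuousOn
  · -- bound
    filter_upwards [ae_restrict_mem measurableSet_Ioi] with x hx
    rw [mem_Ioi] at hx
    intro z hzb
    have hre : ε ≤ z.re := by
      have h1 : |z.re - z₀.re| ≤ ‖z - z₀‖ := by
        simpa using Complex.abs_re_le_norm (z - z₀)
      have h2 : ‖z - z₀‖ < ε := by simpa [Metric.mem_ball, Complex.dist_eq] using hzb
      have := abs_sub_le_iff.mp (h1.trans h2.le) |>.2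
      simp only [hε] at *
      linarith
    rw [norm_mul, norm_mul,
      Complex.norm_cpow_eq_rpow_re_of_pos hx, Complex.norm_exp, norm_neg]
    simp only [Complex.ofReal_re, Complex.neg_re, Complex.mul_re, Complex.ofReal_im,
      Complex.norm_real, Real.norm_eq_abs, abs_of_pos hx, mul_zero, sub_zero]
    rw [Real.rpow_add_one hx.ne' s]
    calc x ^ s * (Real.exp (-(z.re * x)) * x) = x ^ s * x * Real.exp (-(z.re * x)) := by ring
    _ ≤ x ^ s * x * Real.exp (-ε * x) := by
        apply mul_le_mul_of_nonneg_left _ (by positivity)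
        apply Real.exp_le_exp.mpr
        nlinarith
  · -- differentiability
    filter_upwards [ae_restrict_mem measurableSet_Ioi] with x hx
    intro z hzb
    have h := HasDerivAt.const_mul ((x:ℂ) ^ (s:ℂ)) (((hasDerivAt_id z).mul_const (x:ℂ)).neg.cexp)
    simpa using h

lemma aux_key {s : ℝ} (hs : 0 ≤ s) :
    ∫ x : ℝ in Ioi 0, (x:ℂ) ^ (s:ℂ) * Complex.exp (-((1 - Complex.I) * x)) =
      Complex.Gamma (s + 1) * (1 - Complex.I) ^ (-(s:ℂ) - 1) := by
  set J : ℂ → ℂ := fun z => ∫ x : ℝ in Ioi 0, (x:ℂ) ^ (s:ℂ) * Complex.exp (-(z * x)) with hJ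
  set g : ℂ → ℂ := fun z => Complex.Gamma (s + 1) * z ^ (-(s:ℂ) - 1) with hg
  set U : Set ℂ := {z | 0 < z.re} with hU
  have hUopen : IsOpen U := isOpen_lt continuous_const Complex.continuous_re
  have hJa : AnalyticOnNhd ℂ J U :=
    DifferentiableOn.analyticOnNhd
      (fun z hz => (aux_deriv hs hz).differentiableWithinAt) hUopen
  have hga : AnalyticOnNhd ℂ g U := by
    apply DifferentiableOn.analyticOnNhd _ hUopen
    intro z hz
    exact (((differentiableAt_id.cpow (differentiableAt_const _)
      (Or.inl hz)).const_mul _)).differentiableWithinAt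
  have hreal : ∀ r : ℝ, 0 < r → J r = g r := by
    intro r hr
    have h := Complex.integral_cpow_mul_exp_neg_mul_Ioi
      (a := (s:ℂ) + 1) (by simp; linarith) hr
    simp only [add_sub_cancel_right] at h
    rw [hJ, hg]
    simp only
    rw [h, one_div, Complex.inv_cpow _ _ (by rw [Complex.arg_ofReal_of_nonneg hr.le]; positivity),
      ← Complex.cpow_neg, mul_comm]
    ring_nf
  have heq : EqOn J g U := by
    apply hJa.eqOn_of_preconnected_of_frequently_eq hga
      ((convex_halfSpace_re_gt 0).isPreconnected) (z₀ := 1) (by simp [hU])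
    have htend : Filter.Tendsto (fun n : ℕ => ((1 + ((n:ℝ)+1)⁻¹ : ℝ) : ℂ)) Filter.atTop
        (nhdsWithin 1 {(1:ℂ)}ᶜ) := by
      apply tendsto_nhdsWithin_of_tendsto_nhds_of_eventually_within
      · have : Filter.Tendsto (fun n : ℕ => (1 + ((n:ℝ)+1)⁻¹ : ℝ)) Filter.atTop (nhds 1) := by
          have := tendsto_one_div_add_atTop_nhds_zero_nat (𝕜 := ℝ)
          simpa [one_div] using (tendsto_const_nhds.add this)
        have h2 := (Complex.continuous_ofReal.tendsto 1).comp this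
        simpa [Function.comp_def] using h2
      · apply Filter.Eventually.of_forall
        intro n
        simp only [mem_compl_iff, mem_singleton_iff]
        intro hcon
        have : (1 + ((n:ℝ)+1)⁻¹ : ℝ) = 1 := by exact_mod_cast hcon
        have hpos : (0:ℝ) < ((n:ℝ)+1)⁻¹ := by positivity
        linarith
    exact htend.frequently (Filter.Frequently.of_forall fun n => hreal _ (by positivity))
  have h1 : (1 - Complex.I) ∈ U := by simp [hU]
  have := heq h1
  rw [hJ, hg] at this
  exact this

lemma aux_exp_eq : Complex.exp (↑(Real.log 2 / 2) + ↑(-(Real.pi/4)) * Complex.I) =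
    1 - Complex.I := by
  rw [Complex.exp_add, Complex.exp_mul_I, ← Complex.ofReal_cos, ← Complex.ofReal_sin]
  have h2 : Real.exp (Real.log 2 / 2) = Real.sqrt 2 := by
    rw [← Real.log_sqrt (by norm_num)]
    exact Real.exp_log (Real.sqrt_pos.mpr two_pos)
  rw [← Complex.ofReal_exp, h2, Real.cos_neg, Real.sin_neg, Real.cos_pi_div_four,
    Real.sin_pi_div_four]
  have h3 : Real.sqrt 2 * (Real.sqrt 2 / 2) = 1 := by
    have := Real.mul_self_sqrt (show (0:ℝ) ≤ 2 by norm_num)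
    nlinarith
  calc (↑(Real.sqrt 2) : ℂ) * (↑(Real.sqrt 2 / 2) + ↑(-(Real.sqrt 2 / 2)) * Complex.I)
      = ↑(Real.sqrt 2 * (Real.sqrt 2 / 2)) - ↑(Real.sqrt 2 * (Real.sqrt 2 / 2)) * Complex.I := by
        push_cast; ring
    _ = 1 - Complex.I := by rw [h3]; norm_num

lemma aux_log : Complex.log (1 - Complex.I) = ↑(Real.log 2 / 2) + ↑(-(Real.pi/4)) * Complex.I := by
  have him : (↑(Real.log 2 / 2) + ↑(-(Real.pi/4)) * Complex.I).im = -(Real.pi/4) := by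
    simp only [Complex.add_im, Complex.ofReal_im, Complex.mul_im, Complex.I_im, Complex.I_re,
      mul_one, mul_zero, zero_add, Complex.ofReal_re, add_zero]
  rw [← aux_exp_eq, Complex.log_exp] <;> rw [him] <;> linarith [Real.pi_pos]

lemma aux_rhs (s : ℝ) :
    Complex.Gamma ((s:ℂ) + 1) * (1 - Complex.I) ^ (-(s:ℂ) - 1) =
      ↑(Real.Gamma (s+1) * (2:ℝ) ^ (-(s+1)/2) * Real.cos ((s+1) * Real.pi / 4)) +
      ↑(Real.Gamma (s+1) * (2:ℝ) ^ (-(s+1)/2) * Real.sin ((s+1) * Real.pi / 4)) * Complex.I := by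
  have hne : (1 - Complex.I) ≠ 0 := by
    intro h
    have := congrArg Complex.im h
    simp at this
  rw [Complex.cpow_def_of_ne_zero hne, aux_log]
  have harg : (↑(Real.log 2 / 2) + ↑(-(Real.pi/4)) * Complex.I) * (-(s:ℂ) - 1) =
      ↑(-(s+1) * (Real.log 2 / 2)) + ↑((s+1) * Real.pi / 4) * Complex.I := by
    push_cast; ring
  rw [harg, Complex.exp_add, Complex.exp_mul_I, ← Complex.ofReal_cos, ← Complex.ofReal_sin,
    ← Complex.ofReal_exp]
  have hexp : Real.exp (-(s+1) * (Real.log 2 / 2)) = (2:ℝ) ^ (-(s+1)/2) := by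
    rw [Real.rpow_def_of_pos two_pos]; congr 1; ring
  have hG : Complex.Gamma ((s:ℂ) + 1) = ↑(Real.Gamma (s+1)) := by
    rw [show ((s:ℂ)+1) = ((s+1:ℝ):ℂ) by push_cast; ring, Complex.Gamma_ofReal]
  rw [hexp, hG]
  push_cast
  ring

lemma my_ofReal_integral {X : Type*} [MeasurableSpace X] (μ : Measure X) (f : X → ℝ) :
    ∫ x, ((f x : ℂ)) ∂μ = ((∫ x, f x ∂μ : ℝ) : ℂ) :=
  integral_ofReal

lemma aux_ext {a b c d : ℝ} (h : (a:ℂ) + b * Complex.I = (c:ℂ) + d * Complex.I) :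
    a = c ∧ b = d := by
  simpa [Complex.ext_iff] using h


theorem stmt14 (s : ℝ) (hs : 0 ≤ s) :
    twistedMellin Real.sin s = 2 ^ (-(s + 1) / 2) * Real.sin ((s + 1) * Real.pi / 4) ∧
    twistedMellin Real.cos s = 2 ^ (-(s + 1) / 2) * Real.cos ((s + 1) * Real.pi / 4) := by
  have hG : 0 < Real.Gamma (s + 1) := Real.Gamma_pos_of_pos (by linarith)
  have hb : IntegrableOn (fun x : ℝ => x ^ s * Real.exp (-1 * x)) (Ioi 0) :=
    aux_int (by linarith) one_pos
  have hmono : ∀ g : ℝ → ℝ, Continuous g → (∀ x, |g x| ≤ 1) →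
      IntegrableOn (fun x : ℝ => g x * x ^ s * Real.exp (-x)) (Ioi 0) := by
    intro g hg hg1
    apply Integrable.mono' hb
    · apply ContinuousOn.aestronglyMeasurable _ measurableSet_Ioi
      exact (hg.continuousOn.mul
        (continuousOn_id.rpow_const fun x hx => Or.inl (ne_of_gt hx))).mul
        (Real.continuous_exp.comp continuous_neg).continuousOn
    · filter_upwards [ae_restrict_mem measurableSet_Ioi] with x hx
      rw [mem_Ioi] at hx
      rw [Real.norm_eq_abs, abs_mul, abs_mul, abs_of_nonneg (Real.rpow_nonneg hx.le s),
        abs_of_nonneg (Real.exp_pos _).le]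
      calc |g x| * x ^ s * Real.exp (-x) ≤ 1 * x ^ s * Real.exp (-x) := by
            gcongr; exact hg1 x
        _ = x ^ s * Real.exp (-1 * x) := by norm_num
  have hSint : IntegrableOn (fun x : ℝ => Real.sin x * x ^ s * Real.exp (-x)) (Ioi 0) :=
    hmono _ Real.continuous_sin fun x => Real.abs_sin_le_one x
  have hCint : IntegrableOn (fun x : ℝ => Real.cos x * x ^ s * Real.exp (-x)) (Ioi 0) :=
    hmono _ Real.continuous_cos fun x => Real.abs_cos_le_one x
  have hsplit : ∫ x : ℝ in Ioi 0, (x:ℂ) ^ (s:ℂ) * Complex.exp (-((1 - Complex.I) * x)) =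
      ↑(∫ x : ℝ in Ioi 0, Real.cos x * x ^ s * Real.exp (-x)) +
      ↑(∫ x : ℝ in Ioi 0, Real.sin x * x ^ s * Real.exp (-x)) * Complex.I := by
    calc ∫ x : ℝ in Ioi 0, (x:ℂ) ^ (s:ℂ) * Complex.exp (-((1 - Complex.I) * x))
        = ∫ x : ℝ in Ioi 0, (↑(Real.cos x * x ^ s * Real.exp (-x)) +
            ↑(Real.sin x * x ^ s * Real.exp (-x)) * Complex.I) := by
          apply setIntegral_congr_fun measurableSet_Ioi
          intro x hx
          rw [mem_Ioi] at hx
          simp only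
          rw [← Complex.ofReal_cpow hx.le s,
            show (-((1 - Complex.I) * (x:ℂ))) = ↑(-x) + ↑x * Complex.I by push_cast; ring,
            Complex.exp_add, Complex.exp_mul_I, ← Complex.ofReal_exp, ← Complex.ofReal_cos,
            ← Complex.ofReal_sin]
          push_cast
          ring
      _ = (∫ x : ℝ in Ioi 0, (↑(Real.cos x * x ^ s * Real.exp (-x)) : ℂ)) +
          ∫ x : ℝ in Ioi 0, (↑(Real.sin x * x ^ s * Real.exp (-x)) * Complex.I) :=
          integral_add hCint.ofReal (hSint.ofReal.mul_const _)
      _ = ↑(∫ x : ℝ in Ioi 0, Real.cos x * x ^ s * Real.exp (-x)) +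
          ↑(∫ x : ℝ in Ioi 0, Real.sin x * x ^ s * Real.exp (-x)) * Complex.I := by
          rw [integral_mul_const, my_ofReal_integral, my_ofReal_integral]
  have hmain := aux_key hs
  rw [hsplit, aux_rhs] at hmain
  obtain ⟨hC, hS⟩ := aux_ext hmain
  constructor
  · rw [twistedMellin, hS]
    field_simp
  · rw [twistedMellin, hC]
    field_simp
end

section
/- The functions f_r(s) = (∫₀^∞ (x−s)^r x^s e^{-x} dx)/Γ(s+1) satisfy the recurrence f_r(s) = r f_{r-1}(s) + (r−1) s f_{r-2}(s) for all r ≥ 2 and s ≥ 0, with f_0(s) = f_1(s) = 1. -/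
open MeasureTheory Set Real

noncomputable def fr (r : ℕ) (s : ℝ) : ℝ :=
  (∫ x in Set.Ioi (0:ℝ), (x - s) ^ r * x ^ s * Real.exp (-x)) / Real.Gamma (s + 1)

open Filter

lemma integ_base (a : ℝ) (ha : 0 ≤ a) :
    IntegrableOn (fun x : ℝ => x ^ a * Real.exp (-x)) (Ioi 0) := by
  have h := Real.GammaIntegral_convergent (s := a + 1) (by linarith)
  refine h.congr_fun (fun x hx => ?_) measurableSet_Ioi
  rw [add_sub_cancel_right, mul_comm]

lemma integ (s : ℝ) (hs : 0 ≤ s) : ∀ r : ℕ, ∀ a : ℝ, 0 ≤ a →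
    IntegrableOn (fun x : ℝ => (x - s) ^ r * x ^ a * Real.exp (-x)) (Ioi 0) := by
  intro r
  induction r with
  | zero => intro a ha; simpa using integ_base a ha
  | succ n ih =>
    intro a ha
    have h1 := ih (a + 1) (by linarith)
    have h2 := (ih a ha).smul s
    refine IntegrableOn.congr_fun (h1.sub h2) (fun x hx => ?_) measurableSet_Ioi
    have hx0 : (0:ℝ) < x := hx
    simp only [Pi.sub_apply, Pi.smul_apply, smul_eq_mul]
    rw [Real.rpow_add_one hx0.ne']
    ring

lemma I0 (s : ℝ) (hs : 0 ≤ s) :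
    ∫ x in Ioi (0:ℝ), x ^ s * Real.exp (-x) = Real.Gamma (s + 1) := by
  rw [Real.Gamma_eq_integral (by linarith : (0:ℝ) < s + 1)]
  refine setIntegral_congr_fun measurableSet_Ioi (fun x hx => ?_)
  rw [add_sub_cancel_right, mul_comm]

lemma ibp (s : ℝ) (hs : 0 ≤ s) (k : ℕ) :
    ∫ x in Ioi (0:ℝ), (x - s) ^ (k + 2) * x ^ s * Real.exp (-x) =
      (k + 2 : ℝ) * (∫ x in Ioi (0:ℝ), (x - s) ^ (k + 1) * x ^ s * Real.exp (-x))
      + ((k : ℝ) + 1) * s * ∫ x in Ioi (0:ℝ), (x - s) ^ k * x ^ s * Real.exp (-x) := by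
  set g : ℝ → ℝ := fun x => (x - s) ^ (k + 1) * x ^ (s + 1) * Real.exp (-x) with hg
  set g' : ℝ → ℝ := fun x =>
    (-(x - s) ^ (k + 2) + ((k:ℝ) + 2) * (x - s) ^ (k + 1) + ((k:ℝ) + 1) * s * (x - s) ^ k)
      * (x ^ s * Real.exp (-x)) with hg'
  have hderiv : ∀ x ∈ Ioi (0:ℝ), HasDerivAt g (g' x) x := by
    intro x hx
    have hx0 : (0:ℝ) < x := hx
    have h1 : HasDerivAt (fun x : ℝ => (x - s) ^ (k + 1))
        (((k:ℝ) + 1) * (x - s) ^ k) x := by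
      have := ((hasDerivAt_id x).sub_const s).fun_pow (k + 1)
      simpa using this
    have h2 : HasDerivAt (fun x : ℝ => x ^ (s + 1)) ((s + 1) * x ^ s) x := by
      have := Real.hasDerivAt_rpow_const (x := x) (p := s + 1) (Or.inl hx0.ne')
      simpa using this
    have h3 : HasDerivAt (fun x : ℝ => Real.exp (-x)) (-Real.exp (-x)) x := by
      simpa using (hasDerivAt_neg x).exp
    have := (h1.fun_mul h2).fun_mul h3
    refine this.congr_deriv ?_
    simp only [hg']
    rw [Real.rpow_add_one hx0.ne']
    ring
  have hcont : ContinuousWithinAt g (Ici (0:ℝ)) 0 := by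
    apply ContinuousWithinAt.mul
    apply ContinuousWithinAt.mul
    · exact (continuous_pow (k+1)).comp (continuous_id.sub continuous_const) |>.continuousWithinAt
    · exact (Real.continuousAt_rpow_const 0 (s+1) (Or.inr (by linarith))).continuousWithinAt
    · exact (Real.continuous_exp.comp continuous_neg).continuousWithinAt
  have htop : Filter.Tendsto g atTop (nhds 0) := by
    have hmaj := tendsto_rpow_mul_exp_neg_mul_atTop_nhds_zero ((k:ℝ) + 1 + (s + 1)) 1 one_pos
    refine tendsto_of_tendsto_of_tendsto_of_le_of_le' tendsto_const_nhds hmaj ?_ ?_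
    · filter_upwards [eventually_ge_atTop (s + 1)] with x hx
      have hxs : 0 ≤ x - s := by linarith
      have hx0 : 0 < x := by linarith [hs]
      positivity
    · filter_upwards [eventually_ge_atTop (s + 1)] with x hx
      have hxs : 0 ≤ x - s := by linarith
      have hx0 : 0 < x := by linarith [hs]
      have h1 : (x - s) ^ (k + 1) ≤ x ^ ((k:ℝ) + 1) := by
        rw [show ((k:ℝ) + 1) = ((k + 1 : ℕ) : ℝ) by push_cast; ring, Real.rpow_natCast]
        exact pow_le_pow_left₀ hxs (by linarith) _
      have h2 : x ^ ((k:ℝ) + 1 + (s + 1)) = x ^ ((k:ℝ) + 1) * x ^ (s + 1) :=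
        Real.rpow_add hx0 _ _
      simp only [hg, neg_mul, one_mul] at *
      rw [h2]
      have hx2 : 0 < x ^ (s + 1) := Real.rpow_pos_of_pos hx0 _
      have hx3 : 0 < Real.exp (-x) := Real.exp_pos _
      nlinarith [mul_pos hx2 hx3]
  have hint2 := integ s hs (k + 2) s hs
  have hint1 := integ s hs (k + 1) s hs
  have hint0 := integ s hs k s hs
  have hint : IntegrableOn g' (Ioi 0) := by
    refine IntegrableOn.congr_fun ((hint2.neg.add (hint1.smul ((k:ℝ)+2))).add
      (hint0.smul (((k:ℝ)+1)*s))) (fun x hx => ?_) measurableSet_Ioi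
    simp only [Pi.add_apply, Pi.neg_apply, Pi.smul_apply, smul_eq_mul, hg']
    ring
  have key := integral_Ioi_of_hasDerivAt_of_tendsto hcont hderiv hint htop
  have hg0 : g 0 = 0 := by
    simp [hg, Real.zero_rpow (by linarith : s + 1 ≠ 0)]
  rw [hg0, sub_zero] at key
  have e1 : ∫ x in Ioi (0:ℝ), g' x =
      ∫ x in Ioi (0:ℝ), (((k:ℝ)+2) * ((x-s)^(k+1)*x^s*Real.exp (-x))
        + ((k:ℝ)+1)*s*((x-s)^k*x^s*Real.exp (-x))
        - (x-s)^(k+2)*x^s*Real.exp (-x)) :=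
    setIntegral_congr_fun measurableSet_Ioi (fun x hx => by simp only [hg']; ring)
  rw [key] at e1
  have hadd : IntegrableOn (fun x : ℝ => ((k:ℝ)+2) * ((x-s)^(k+1)*x^s*Real.exp (-x))
      + ((k:ℝ)+1)*s*((x-s)^k*x^s*Real.exp (-x))) (Ioi 0) :=
    (hint1.const_mul _).add (hint0.const_mul _)
  rw [integral_sub hadd hint2,
    integral_add (hint1.const_mul _) (hint0.const_mul _), integral_const_mul _ _,
    integral_const_mul _ _] at e1
  linarith

theorem stmt16 (s : ℝ) (hs : 0 ≤ s) :
    fr 0 s = 1 ∧ fr 1 s = 1 ∧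
    ∀ r : ℕ, 2 ≤ r → fr r s = r * fr (r - 1) s + (r - 1) * s * fr (r - 2) s := by
  have hG : Real.Gamma (s + 1) ≠ 0 := (Real.Gamma_pos_of_pos (by linarith)).ne'
  refine ⟨?_, ?_, ?_⟩
  · unfold fr
    rw [show (∫ x in Ioi (0:ℝ), (x - s) ^ 0 * x ^ s * Real.exp (-x))
        = ∫ x in Ioi (0:ℝ), x ^ s * Real.exp (-x) from by simp, I0 s hs, div_self hG]
  · unfold fr
    have e : ∫ x in Ioi (0:ℝ), (x - s) ^ 1 * x ^ s * Real.exp (-x)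
        = ∫ x in Ioi (0:ℝ), (x ^ (s+1) * Real.exp (-x) - s * (x ^ s * Real.exp (-x))) := by
      refine setIntegral_congr_fun measurableSet_Ioi (fun x hx => ?_)
      have hx0 : (0:ℝ) < x := hx
      rw [Real.rpow_add_one hx0.ne']; ring
    rw [e, integral_sub (integ_base (s+1) (by linarith)) ((integ_base s hs).const_mul s),
      integral_const_mul, I0 s hs, I0 (s+1) (by linarith),
      Real.Gamma_add_one (by linarith : s + 1 ≠ 0)]
    field_simp
    ring
  · intro r hr
    obtain ⟨k, rfl⟩ := Nat.exists_eq_add_of_le hr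
    have h1 : 2 + k - 1 = k + 1 := by omega
    have h2 : 2 + k - 2 = k := by omega
    have h3 : 2 + k = k + 2 := by omega
    rw [h1, h2, h3]
    unfold fr
    have h := ibp s hs k
    rw [h]
    push_cast
    ring
end

section
/- For each r ≥ 0, the function f_r(s) = Σ_{i=0}^r (−1)^{r-i} C(r,i) (s+1)(s+2)⋯(s+i) s^{r-i} is a polynomial in s of degree at most ⌊r/2⌋, with f_r(0) = r! and, for r = 2k even, leading coefficient (2k−1)!!. -/
open Finset

noncomputable def frPoly (r : ℕ) (s : ℝ) : ℝ :=
  ∑ i ∈ Finset.range (r + 1),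
    (-1 : ℝ) ^ (r - i) * (r.choose i) *
      (∏ j ∈ Finset.range i, (s + (j + 1))) * s ^ (r - i)

noncomputable def gFun (r : ℕ) (s : ℝ) : ℝ :=
  ∑ i ∈ Finset.range (r + 1),
    (-1 : ℝ) ^ (r - i) * (r.choose i) * i *
      (∏ j ∈ Finset.range i, (s + (j + 1))) * s ^ (r - i)

lemma T1sum (r : ℕ) (s : ℝ) :
    ∑ i ∈ Finset.range (r + 1),
      (-1 : ℝ) ^ (r - i) * (r.choose i) *
        (∏ j ∈ Finset.range (i + 1), (s + (j + 1))) * s ^ (r - i)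
    = (s + 1) * frPoly r s + gFun r s := by
  rw [frPoly, gFun, Finset.mul_sum, ← Finset.sum_add_distrib]
  refine Finset.sum_congr rfl fun i _ => ?_
  rw [Finset.prod_range_succ]
  ring

lemma shiftSum (r : ℕ) (s : ℝ) :
    (∑ i ∈ Finset.range (r + 1),
        (-1 : ℝ) ^ (r - i) * (r.choose (i + 1)) *
          (∏ j ∈ Finset.range (i + 1), (s + (j + 1))) * s ^ (r - i))
      + (-1 : ℝ) ^ (r + 1) * s ^ (r + 1)
    = (-s) * frPoly r s := by
  have h := Finset.sum_range_succ' (fun i => (-1 : ℝ) ^ (r + 1 - i) * (r.choose i) *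
      (∏ j ∈ Finset.range i, (s + (j + 1))) * s ^ (r + 1 - i)) (r + 1)
  simp only [Nat.succ_sub_succ, Nat.choose_zero_right, Nat.cast_one, mul_one,
    Finset.prod_range_zero, Nat.sub_zero, one_mul] at h
  rw [← h, Finset.sum_range_succ]
  simp only [Nat.choose_succ_self, Nat.cast_zero, mul_zero, zero_mul, add_zero,
    Nat.add_sub_cancel_left]
  rw [frPoly, Finset.mul_sum]
  refine Finset.sum_congr rfl fun i hi => ?_
  rw [Finset.mem_range] at hi
  have hle : i ≤ r := Nat.lt_succ_iff.mp hi
  rw [Nat.succ_sub hle, pow_succ, pow_succ]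
  ring

lemma frA (r : ℕ) (s : ℝ) : frPoly (r + 1) s = frPoly r s + gFun r s := by
  have key : frPoly (r + 1) s
      = ((s + 1) * frPoly r s + gFun r s) + (-s) * frPoly r s := by
    rw [frPoly, Finset.sum_range_succ']
    simp only [Nat.succ_sub_succ, Nat.choose_zero_right, Nat.cast_one, mul_one,
      Finset.prod_range_zero, Nat.sub_zero, one_mul]
    have hsplit : ∀ i ∈ Finset.range (r + 1),
        (-1 : ℝ) ^ (r - i) * (((r + 1).choose (i + 1) : ℕ) : ℝ) *
          (∏ j ∈ Finset.range (i + 1), (s + (j + 1))) * s ^ (r - i)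
        = (-1 : ℝ) ^ (r - i) * (r.choose i) *
            (∏ j ∈ Finset.range (i + 1), (s + (j + 1))) * s ^ (r - i)
          + (-1 : ℝ) ^ (r - i) * (r.choose (i + 1)) *
            (∏ j ∈ Finset.range (i + 1), (s + (j + 1))) * s ^ (r - i) := by
      intro i _
      rw [Nat.choose_succ_succ']
      push_cast
      ring
    rw [Finset.sum_congr rfl hsplit, Finset.sum_add_distrib, T1sum, add_assoc, shiftSum]
  rw [key]; ring

lemma frB (r : ℕ) (s : ℝ) :
    gFun (r + 1) s = (r + 1) * ((s + 1) * frPoly r s + gFun r s) := by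
  rw [gFun, Finset.sum_range_succ']
  simp only [Nat.cast_zero, mul_zero, zero_mul, add_zero, Nat.succ_sub_succ]
  rw [← T1sum, Finset.mul_sum]
  refine Finset.sum_congr rfl fun i _ => ?_
  have h := Nat.add_one_mul_choose_eq r i
  have h' : ((r + 1 : ℕ) : ℝ) * (r.choose i : ℕ) = ((r + 1).choose (i + 1) : ℕ) * ((i + 1 : ℕ) : ℝ) := by
    rw [← Nat.cast_mul, ← Nat.cast_mul]
    exact_mod_cast congrArg (Nat.cast (R := ℝ)) h
  push_cast at h' ⊢
  linear_combination (-((-1:ℝ)^(r-i) * (∏ j ∈ Finset.range (i + 1), (s + (j + 1))) * s^(r-i))) * h'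

lemma frRec (r : ℕ) (s : ℝ) :
    frPoly (r + 2) s = (r + 2) * frPoly (r + 1) s + (r + 1) * s * frPoly r s := by
  have hA1 := frA r s
  have hA2 := frA (r + 1) s
  have hB := frB r s
  rw [show r + 2 = (r + 1) + 1 from rfl, hA2, hB]
  linear_combination (-(r : ℝ) - 1) * hA1

noncomputable def pr : ℕ → Polynomial ℝ
  | 0 => 1
  | 1 => 1
  | (r + 2) => Polynomial.C ((r : ℝ) + 2) * pr (r + 1)
      + Polynomial.C ((r : ℝ) + 1) * (Polynomial.X * pr r)

lemma frPoly_zero (s : ℝ) : frPoly 0 s = 1 := by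
  simp [frPoly]

lemma frPoly_one (s : ℝ) : frPoly 1 s = 1 := by
  simp [frPoly, Finset.sum_range_succ]

lemma pr_eval : ∀ r : ℕ, ∀ s : ℝ, (pr r).eval s = frPoly r s := by
  intro r
  induction r using Nat.strong_induction_on with
  | _ r ih =>
    match r with
    | 0 => intro s; simp [pr, frPoly_zero]
    | 1 => intro s; simp [pr, frPoly_one]
    | (r + 2) =>
      intro s
      rw [pr, frRec]
      simp only [Polynomial.eval_add, Polynomial.eval_mul, Polynomial.eval_C,
        Polynomial.eval_X]
      rw [ih (r + 1) (by omega) s, ih r (by omega) s]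
      ring

lemma pr_deg : ∀ r : ℕ, (pr r).natDegree ≤ r / 2 := by
  intro r
  induction r using Nat.strong_induction_on with
  | _ r ih =>
    match r with
    | 0 => simp [pr]
    | 1 => simp [pr]
    | (r + 2) =>
      rw [pr]
      refine le_trans (Polynomial.natDegree_add_le _ _) ?_
      have h1 : (Polynomial.C ((r : ℝ) + 2) * pr (r + 1)).natDegree ≤ (r + 1) / 2 :=
        le_trans (Polynomial.natDegree_C_mul_le _ _) (ih (r + 1) (by omega))
      have h2 : (Polynomial.C ((r : ℝ) + 1) * (Polynomial.X * pr r)).natDegree ≤ 1 + r / 2 := by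
        refine le_trans (Polynomial.natDegree_C_mul_le _ _) ?_
        refine le_trans (Polynomial.natDegree_mul_le) ?_
        have := ih r (by omega)
        have hx : (Polynomial.X : Polynomial ℝ).natDegree ≤ 1 := Polynomial.natDegree_X_le
        omega
      have : (r + 1) / 2 ≤ (r + 2) / 2 := by omega
      have : 1 + r / 2 ≤ (r + 2) / 2 := by omega
      omega

lemma pr_eval_zero : ∀ r : ℕ, (pr r).eval 0 = r.factorial := by
  intro r
  induction r using Nat.strong_induction_on with
  | _ r ih =>
    match r with
    | 0 => simp [pr]
    | 1 => simp [pr]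
    | (r + 2) =>
      rw [pr]
      simp only [Polynomial.eval_add, Polynomial.eval_mul, Polynomial.eval_C,
        Polynomial.eval_X, zero_mul, mul_zero, add_zero]
      rw [ih (r + 1) (by omega)]
      rw [show (r + 2).factorial = (r + 2) * (r + 1).factorial from rfl]
      push_cast
      ring

lemma df_odd (k : ℕ) :
    Nat.doubleFactorial (2 * k + 1) = (2 * k + 1) * Nat.doubleFactorial (2 * k - 1) := by
  cases k with
  | zero => decide
  | succ k =>
    have h1 : 2 * (k + 1) + 1 = (2 * k + 1) + 2 := by omega
    have h2 : 2 * (k + 1) - 1 = 2 * k + 1 := by omega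
    rw [h1, h2]
    rfl

lemma pr_coeff : ∀ k : ℕ, (pr (2 * k)).coeff k = (Nat.doubleFactorial (2 * k - 1) : ℝ) := by
  intro k
  induction k with
  | zero => simp [pr]
  | succ k ih =>
    have h : 2 * (k + 1) = (2 * k) + 2 := by ring
    rw [h, pr]
    have hdeg : (pr (2 * k + 1)).coeff (k + 1) = 0 := by
      apply Polynomial.coeff_eq_zero_of_natDegree_lt
      have := pr_deg (2 * k + 1)
      omega
    rw [Polynomial.coeff_add, Polynomial.coeff_C_mul, Polynomial.coeff_C_mul,
      Polynomial.coeff_X_mul, hdeg, mul_zero, zero_add, ih]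
    have hk : 2 * k + 2 - 1 = 2 * k + 1 := by omega
    rw [hk, df_odd]
    push_cast
    ring

theorem stmt17 (r : ℕ) :
    ∃ p : Polynomial ℝ,
      p.natDegree ≤ r / 2 ∧
      (∀ s : ℝ, p.eval s = frPoly r s) ∧
      frPoly r 0 = r.factorial ∧
      (∀ k : ℕ, r = 2 * k → p.coeff k = Nat.doubleFactorial (2 * k - 1)) := by
  refine ⟨pr r, pr_deg r, pr_eval r, ?_, ?_⟩
  · rw [← pr_eval r 0, pr_eval_zero]
  · intro k hk
    subst hk
    exact pr_coeff k
end

section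
/- The exponential generating function of the polynomials f_r(s) is Σ_{r=0}^∞ f_r(s) x^r/r! = e^{-sx}/(1−x)^{1+s}, valid for |x| < 1. -/
open Finset Real Filter Topology

noncomputable def binCoef (a : ℝ) (i : ℕ) : ℝ :=
  (∏ j ∈ Finset.range i, (a + j)) / i.factorial

lemma binCoef_zero (a : ℝ) : binCoef a 0 = 1 := by simp [binCoef]

lemma binCoef_succ (a : ℝ) (i : ℕ) :
    binCoef a (i + 1) * (i + 1) = (a + i) * binCoef a i := by
  have h0 : (i.factorial : ℝ) ≠ 0 := Nat.cast_ne_zero.2 i.factorial_ne_zero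
  have h1 : ((i + 1 : ℕ).factorial : ℝ) = (i + 1) * i.factorial := by
    rw [Nat.factorial_succ]; push_cast; ring
  rw [binCoef, binCoef, Finset.prod_range_succ, h1]
  field_simp

lemma binCoef_pos {b : ℝ} (hb : 0 < b) (i : ℕ) : 0 < binCoef b i := by
  apply div_pos
  · exact Finset.prod_pos fun j _ => by positivity
  · exact_mod_cast i.factorial_pos

lemma abs_binCoef_le (a : ℝ) (i : ℕ) : |binCoef a i| ≤ binCoef (|a| + 1) i := by
  rw [binCoef, binCoef, abs_div, Nat.abs_cast]
  have hfac : (0:ℝ) < i.factorial := by exact_mod_cast i.factorial_pos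
  gcongr
  rw [Finset.abs_prod]
  apply Finset.prod_le_prod (fun j _ => abs_nonneg _) fun j _ => ?_
  calc |a + (j : ℝ)| ≤ |a| + j := by
        refine (abs_add_le _ _).trans ?_; simp
    _ ≤ |a| + 1 + j := by linarith

lemma summable_binAux {b r : ℝ} (hb : 0 < b) (hr0 : 0 < r) (hr1 : r < 1) :
    Summable (fun i : ℕ => ((i : ℝ) + 1) * binCoef b i * r ^ i) := by
  have hpos : ∀ i : ℕ, 0 < ((i : ℝ) + 1) * binCoef b i * r ^ i := fun i => by
    have := binCoef_pos hb i; positivity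
  apply summable_of_ratio_test_tendsto_lt_one hr1
  · filter_upwards with i; exact (hpos i).ne'
  · have key : Tendsto
        (fun i : ℕ => ((1 : ℝ) + 1 / (i + 1)) * (1 + (b - 1) * (1 / (i + 1))) * r)
        atTop (𝓝 ((1 + 0) * (1 + (b - 1) * 0) * r)) := by
      refine Tendsto.mul (Tendsto.mul ?_ ?_) tendsto_const_nhds
      · exact tendsto_const_nhds.add tendsto_one_div_add_atTop_nhds_zero_nat
      · exact tendsto_const_nhds.add
          (tendsto_one_div_add_atTop_nhds_zero_nat.const_mul _)
    simp only [add_zero, mul_zero, one_mul] at key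
    refine key.congr fun i => ?_
    have hi1 : ((i : ℝ) + 1) ≠ 0 := by positivity
    have hrec := binCoef_succ b i
    have hc : binCoef b (i + 1) = (b + i) * binCoef b i / (i + 1) := by
      field_simp at hrec ⊢; linarith [hrec]
    rw [Real.norm_eq_abs, Real.norm_eq_abs, abs_of_pos (hpos (i + 1)),
      abs_of_pos (hpos i)]
    have hcne : binCoef b i ≠ 0 := (binCoef_pos hb i).ne'
    have hrne : r ^ i ≠ 0 := by positivity
    rw [hc, pow_succ]
    field_simp
    push_cast
    ring
-- summability helpers
lemma summable_main (a : ℝ) {r : ℝ} (hr : |r| < 1) :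
    Summable (fun i : ℕ => ((i : ℝ) + 1) * |binCoef a i| * |r| ^ i) := by
  set b := |a| + 1 with hb
  have hb0 : 0 < b := by positivity
  set ρ := (|r| + 1) / 2 with hρ
  have hρ0 : 0 < ρ := by positivity
  have hρ1 : ρ < 1 := by rw [hρ]; linarith [abs_nonneg r]
  have hrρ : |r| ≤ ρ := by rw [hρ]; linarith
  refine Summable.of_nonneg_of_le (fun i => by positivity) (fun i => ?_)
    (summable_binAux hb0 hρ0 hρ1)
  have h1 : |binCoef a i| ≤ binCoef b i := abs_binCoef_le a i
  have h2 : |r| ^ i ≤ ρ ^ i := pow_le_pow_left₀ (abs_nonneg r) hrρ i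
  have hi : (0:ℝ) ≤ (i:ℝ) + 1 := by positivity
  calc ((i : ℝ) + 1) * |binCoef a i| * |r| ^ i
      ≤ ((i : ℝ) + 1) * binCoef b i * ρ ^ i := by
        exact mul_le_mul (mul_le_mul le_rfl h1 (abs_nonneg _) hi) h2 (by positivity)
          (mul_nonneg hi (binCoef_pos hb0 i).le)

lemma summable_norm_bin (a : ℝ) {r : ℝ} (hr : |r| < 1) :
    Summable (fun i : ℕ => ‖binCoef a i * r ^ i‖) := by
  refine Summable.of_nonneg_of_le (fun i => norm_nonneg _) (fun i => ?_) (summable_main a hr)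
  rw [Real.norm_eq_abs, abs_mul, abs_pow]
  have : (0:ℝ) ≤ |binCoef a i| * |r| ^ i := by positivity
  nlinarith [abs_nonneg (binCoef a i), pow_nonneg (abs_nonneg r) i,
    Nat.cast_nonneg (α := ℝ) i]

lemma summable_bin (a : ℝ) {r : ℝ} (hr : |r| < 1) :
    Summable (fun i : ℕ => binCoef a i * r ^ i) :=
  (summable_norm_bin a hr).of_norm

noncomputable def binF (a : ℝ) (y : ℝ) : ℝ := ∑' i : ℕ, binCoef a i * y ^ i

lemma summable_deriv_major (a : ℝ) {ρ : ℝ} (hρ0 : 0 < ρ) (hρ1 : ρ < 1) :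
    Summable (fun i : ℕ => |binCoef a i| * ((i : ℝ) * ρ ^ (i - 1))) := by
  rw [← summable_nat_add_iff 1]
  have hρ : |ρ| < 1 := by rw [abs_of_pos hρ0]; exact hρ1
  have base := (summable_main a hρ).mul_left ρ⁻¹
  refine Summable.of_nonneg_of_le (fun i => by positivity) (fun i => ?_)
    ((summable_nat_add_iff 1).mpr base)
  simp only [Nat.add_sub_cancel]
  have h1 : |ρ| = ρ := abs_of_pos hρ0
  rw [h1] at *
  have : ρ⁻¹ * (((i : ℕ) + 1 + 1 : ℝ) * |binCoef a (i + 1)| * ρ ^ (i + 1))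
      = ((i : ℝ) + 2) * |binCoef a (i + 1)| * ρ ^ i := by
    rw [pow_succ]; field_simp; ring
  push_cast
  rw [this]
  have h2 : (0:ℝ) ≤ ρ ^ i := by positivity
  nlinarith [abs_nonneg (binCoef a (i + 1)), Nat.cast_nonneg (α := ℝ) i,
    mul_nonneg (abs_nonneg (binCoef a (i+1))) h2]

lemma hasDerivAt_binF (a : ℝ) {x₀ : ℝ} (hx : |x₀| < 1) :
    HasDerivAt (binF a) (∑' i : ℕ, binCoef a i * ((i : ℝ) * x₀ ^ (i - 1))) x₀ := by
  set ρ := (|x₀| + 1) / 2 with hρ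
  have hρ0 : 0 < ρ := by positivity
  have hρ1 : ρ < 1 := by rw [hρ]; linarith [abs_nonneg x₀]
  have hxρ : |x₀| < ρ := by rw [hρ]; linarith
  refine hasDerivAt_tsum_of_isPreconnected (u := fun i => |binCoef a i| * ((i:ℝ) * ρ ^ (i-1)))
    (summable_deriv_major a hρ0 hρ1) isOpen_Ioo (t := Set.Ioo (-ρ) ρ)
    (isPreconnected_Ioo) (fun i y _ => (hasDerivAt_pow i y).const_mul (binCoef a i))
    (fun i y hy => ?_) (y₀ := 0) ⟨by linarith, hρ0⟩ ?_ ⟨neg_lt_of_abs_lt hxρ, lt_of_abs_lt hxρ⟩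
  · have hyρ : |y| ≤ ρ := by
      rw [abs_le]; exact ⟨hy.1.le, hy.2.le⟩
    rw [Real.norm_eq_abs, abs_mul, abs_mul, Nat.abs_cast, abs_pow]
    have h2 : |y| ^ (i - 1) ≤ ρ ^ (i - 1) := pow_le_pow_left₀ (abs_nonneg _) hyρ _
    exact mul_le_mul_of_nonneg_left
      (mul_le_mul_of_nonneg_left h2 (Nat.cast_nonneg i)) (abs_nonneg _)
  · exact (summable_bin a (by simp)).congr fun i => rfl

lemma summable_deriv_term (a : ℝ) {x : ℝ} (hx : |x| < 1) :
    Summable (fun i : ℕ => binCoef a i * ((i : ℝ) * x ^ (i - 1))) := by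
  set ρ := (|x| + 1) / 2 with hρ
  have hρ0 : 0 < ρ := by positivity
  have hρ1 : ρ < 1 := by rw [hρ]; linarith [abs_nonneg x]
  have hxρ : |x| ≤ ρ := by rw [hρ]; linarith
  refine Summable.of_norm_bounded (summable_deriv_major a hρ0 hρ1) fun i => ?_
  rw [Real.norm_eq_abs, abs_mul, abs_mul, Nat.abs_cast, abs_pow]
  have h2 : |x| ^ (i - 1) ≤ ρ ^ (i - 1) := pow_le_pow_left₀ (abs_nonneg _) hxρ _
  exact mul_le_mul_of_nonneg_left
    (mul_le_mul_of_nonneg_left h2 (Nat.cast_nonneg i)) (abs_nonneg _)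

lemma summable_i_term (a : ℝ) {x : ℝ} (hx : |x| < 1) :
    Summable (fun i : ℕ => (i : ℝ) * (binCoef a i * x ^ i)) := by
  refine Summable.of_norm_bounded (summable_main a hx) fun i => ?_
  rw [Real.norm_eq_abs, abs_mul, abs_mul, Nat.abs_cast, abs_pow, ← mul_assoc]
  have h1 : (i : ℝ) ≤ (i : ℝ) + 1 := by linarith
  exact mul_le_mul_of_nonneg_right
    (mul_le_mul_of_nonneg_right h1 (abs_nonneg _)) (by positivity)

lemma binF_ode (a : ℝ) {x : ℝ} (hx : |x| < 1) :
    (1 - x) * (∑' i : ℕ, binCoef a i * ((i : ℝ) * x ^ (i - 1))) = a * binF a x := by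
  set D := ∑' i : ℕ, binCoef a i * ((i : ℝ) * x ^ (i - 1)) with hD
  have hg' := summable_deriv_term a hx
  have hT := summable_i_term a hx
  have hA := summable_bin a hx
  have h1 : D = a * binF a x + ∑' i : ℕ, (i : ℝ) * (binCoef a i * x ^ i) := by
    rw [hD, Summable.tsum_eq_zero_add hg']
    simp only [Nat.cast_zero, zero_mul, mul_zero, zero_add]
    have hcongr : ∀ i : ℕ, binCoef a (i + 1) * (((i : ℝ) + 1) * x ^ i)
        = a * (binCoef a i * x ^ i) + (i : ℝ) * (binCoef a i * x ^ i) := fun i => by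
      linear_combination x ^ i * binCoef_succ a i
    calc (∑' i : ℕ, binCoef a (i + 1) * ((↑(i + 1) : ℝ) * x ^ (i + 1 - 1)))
        = ∑' i : ℕ, (a * (binCoef a i * x ^ i) + (i : ℝ) * (binCoef a i * x ^ i)) := by
          refine tsum_congr fun i => ?_
          rw [Nat.add_sub_cancel, Nat.cast_add, Nat.cast_one]
          exact hcongr i
      _ = a * binF a x + ∑' i : ℕ, (i : ℝ) * (binCoef a i * x ^ i) := by
          rw [Summable.tsum_add (hA.mul_left a) hT, tsum_mul_left]; rfl
  have h2 : x * D = ∑' i : ℕ, (i : ℝ) * (binCoef a i * x ^ i) := by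
    rw [hD, ← tsum_mul_left]
    refine tsum_congr fun i => ?_
    cases i with
    | zero => simp
    | succ k => rw [Nat.add_sub_cancel]; push_cast; ring
  calc (1 - x) * D = D - x * D := by ring
    _ = a * binF a x := by rw [h2, h1]; ring

lemma binF_zero' (a : ℝ) : binF a 0 = 1 := by
  rw [binF, tsum_eq_single 0 (fun j hj => by simp [zero_pow hj])]
  simp [binCoef_zero]

lemma hasSum_binomial (a : ℝ) {x : ℝ} (hx : |x| < 1) :
    HasSum (fun i : ℕ => binCoef a i * x ^ i) ((1 - x) ^ (-a)) := by
  obtain ⟨hx1, hx2⟩ := abs_lt.1 hx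
  have hA := summable_bin a hx
  suffices h : binF a x = (1 - x) ^ (-a) by rw [← h]; exact hA.hasSum
  set ψ : ℝ → ℝ := fun y => binF a y * (1 - y) ^ a with hψdef
  have hder : ∀ y ∈ Set.Ioo (-1 : ℝ) 1, HasDerivAt ψ 0 y := by
    intro y hy
    have hy1 : 0 < 1 - y := by linarith [hy.2]
    have hay : |y| < 1 := abs_lt.2 ⟨hy.1, hy.2⟩
    have hF := hasDerivAt_binF a hay
    have h1 : HasDerivAt (fun y : ℝ => 1 - y) (-1) y := (hasDerivAt_id y).const_sub 1
    have hR := h1.rpow_const (p := a) (Or.inl hy1.ne')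
    have hmul := hF.mul hR
    refine hmul.congr_deriv ?_
    have hode := binF_ode a hay
    have hsplit : (1 - y) ^ a = (1 - y) ^ (a - 1) * (1 - y) := by
      rw [← Real.rpow_add_one hy1.ne' (a - 1)]; norm_num
    rw [hsplit]
    linear_combination ((1 - y) ^ (a - 1)) * hode
  have hsub : Set.Icc (min 0 x) (max 0 x) ⊆ Set.Ioo (-1 : ℝ) 1 := by
    intro y hy
    constructor
    · exact lt_of_lt_of_le (lt_min (by norm_num) hx1) hy.1
    · exact lt_of_le_of_lt hy.2 (max_lt (by norm_num) hx2)
  have hcont : ContinuousOn ψ (Set.Icc (min 0 x) (max 0 x)) :=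
    fun y hy => ((hder y (hsub hy)).continuousAt).continuousWithinAt
  have hd0 : ∀ y ∈ Set.Ico (min 0 x) (max 0 x), HasDerivWithinAt ψ 0 (Set.Ici y) y :=
    fun y hy => (hder y (hsub ⟨hy.1, hy.2.le⟩)).hasDerivWithinAt
  have key := constant_of_has_deriv_right_zero hcont hd0
  have e1 : ψ x = ψ (min 0 x) := key x ⟨min_le_right _ _, le_max_right _ _⟩
  have e2 : ψ 0 = ψ (min 0 x) := key 0 ⟨min_le_left _ _, le_max_left _ _⟩
  have hψ0 : ψ 0 = 1 := by
    simp [hψdef, binF_zero' a, Real.one_rpow]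
  have hψx : binF a x * (1 - x) ^ a = 1 := by
    have : ψ x = 1 := (e1.trans e2.symm).trans hψ0
    simpa [hψdef] using this
  have h1x : 0 < 1 - x := by linarith
  have ht : (1 - x) ^ a ≠ 0 := (Real.rpow_pos_of_pos h1x a).ne'
  rw [Real.rpow_neg h1x.le]
  field_simp
  linarith [hψx]

theorem stmt18 (s x : ℝ) (hx : |x| < 1) :
    HasSum (fun r : ℕ => frPoly r s * x ^ r / r.factorial)
      (Real.exp (-s * x) / (1 - x) ^ (1 + s)) := by
  have h1x : 0 < 1 - x := by
    have := abs_lt.1 hx; linarith [this.2]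
  set A : ℕ → ℝ := fun i => binCoef (1 + s) i * x ^ i with hAdef
  set B : ℕ → ℝ := fun j => (-s * x) ^ j / j.factorial with hBdef
  have hA : HasSum A ((1 - x) ^ (-(1 + s))) := hasSum_binomial (1 + s) hx
  have hB : HasSum B (Real.exp (-s * x)) := by
    rw [Real.exp_eq_exp_ℝ]
    exact NormedSpace.expSeries_div_hasSum_exp (-s * x)
  have hAn : Summable fun i => ‖A i‖ := summable_norm_bin (1 + s) hx
  have hBn : Summable fun j => ‖B j‖ := by
    have := Real.summable_pow_div_factorial |(-s * x)|
    refine this.congr fun j => ?_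
    rw [hBdef]
    rw [Real.norm_eq_abs, abs_div, abs_pow, Nat.abs_cast]
  have hprod := hasSum_sum_range_mul_of_summable_norm hAn hBn
  rw [hA.tsum_eq, hB.tsum_eq] at hprod
  have hval : (1 - x) ^ (-(1 + s)) * Real.exp (-s * x)
      = Real.exp (-s * x) / (1 - x) ^ (1 + s) := by
    rw [Real.rpow_neg h1x.le, div_eq_mul_inv, mul_comm]
  rw [hval] at hprod
  have hterm : ∀ n : ℕ, ∑ k ∈ Finset.range (n + 1), A k * B (n - k)
      = frPoly n s * x ^ n / n.factorial := by
    intro n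
    rw [frPoly, Finset.sum_mul, Finset.sum_div]
    refine Finset.sum_congr rfl fun i hi => ?_
    have hin : i ≤ n := Nat.lt_succ_iff.1 (Finset.mem_range.1 hi)
    have hfi : (i.factorial : ℝ) ≠ 0 := Nat.cast_ne_zero.2 i.factorial_ne_zero
    have hfni : ((n - i).factorial : ℝ) ≠ 0 := Nat.cast_ne_zero.2 (n - i).factorial_ne_zero
    have hfn : (n.factorial : ℝ) ≠ 0 := Nat.cast_ne_zero.2 n.factorial_ne_zero
    have hC : (n.choose i : ℝ) * i.factorial * (n - i).factorial = n.factorial := by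
      exact_mod_cast congrArg (Nat.cast (R := ℝ))
        (Nat.choose_mul_factorial_mul_factorial hin)
    have hC2 : (n.choose i : ℝ) = n.factorial / (i.factorial * (n - i).factorial) := by
      rw [eq_div_iff (mul_ne_zero hfi hfni), ← mul_assoc]; exact hC
    have hxp : x ^ i * x ^ (n - i) = x ^ n := by
      rw [← pow_add, Nat.add_sub_cancel' hin]
    have hneg : (-s * x) ^ (n - i) = (-1 : ℝ) ^ (n - i) * s ^ (n - i) * x ^ (n - i) := by
      rw [neg_mul, neg_pow, mul_pow]; ring
    have hP : (∏ j ∈ Finset.range i, ((1 + s) + (j : ℝ)))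
        = ∏ j ∈ Finset.range i, (s + ((j : ℝ) + 1)) :=
      Finset.prod_congr rfl fun j _ => by ring
    simp only [hAdef, hBdef, binCoef]
    rw [hP, hneg, hC2, ← hxp]
    field_simp
  rw [show (fun n => ∑ k ∈ Finset.range (n + 1), A k * B (n - k))
      = fun n : ℕ => frPoly n s * x ^ n / n.factorial from funext hterm] at hprod
  exact hprod
end
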